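/- arXiv:1401.6823 — 8 statements merged into one kernel-verified Lean document; each statement's English description precedes it below -/
import Mathlib

section
/- Let N ≥ 1, and let n, K be natural numbers with n ≤ N and K ≤ N. Set p = K/N as a real number, and let c ≥ 1 be a real number. Then Σ_{t=0}^{n} c^t · C(K,t)·C(N−K, n−t) / C(N,n) ≤ Σ_{t=0}^{n} c^t · C(n,t)·p^t·(1−p)^{n−t}. (This is the statement that E(c^Z) ≤ E(c^Y) for a hypergeometric random variable Z ∼ Hypergeom(N, K, n) and a binomial random variable Y ∼ Binom(n, K/N).) -/
open Finset

/-- generalized trinomial revision -/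
lemma myChooseMul {n k s : ℕ} (hsk : s ≤ k) :
    n.choose k * k.choose s = n.choose s * (n - s).choose (k - s) := by
  rcases le_or_gt k n with h | h
  · exact Nat.choose_mul hsk
  · rw [Nat.choose_eq_zero_of_lt h, Nat.zero_mul]
    rcases le_or_gt s n with hs | hs
    · rw [Nat.choose_eq_zero_of_lt (show n - s < k - s by omega), Nat.mul_zero]
    · rw [Nat.choose_eq_zero_of_lt hs, Nat.zero_mul]

/-- Vandermonde, range form -/
lemma myVand (a b m : ℕ) :
    ∑ s ∈ range (m + 1), a.choose s * b.choose (m - s) = (a + b).choose m := by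
  rw [Nat.add_choose_eq, Finset.Nat.sum_antidiagonal_eq_sum_range_succ
    (fun i j => a.choose i * b.choose j) m]

lemma myInnerSum (N n K k : ℕ) (hK : K ≤ N) (hk : k ≤ n) :
    ∑ t ∈ range (n + 1), t.choose k * (K.choose t * (N - K).choose (n - t)) =
      K.choose k * (N - k).choose (n - k) := by
  have h1 : ∑ t ∈ range (n + 1), t.choose k * (K.choose t * (N - K).choose (n - t)) =
      ∑ t ∈ Finset.Ico k (n + 1), t.choose k * (K.choose t * (N - K).choose (n - t)) := by
    refine (Finset.sum_subset (fun x hx => Finset.mem_range.2 (Finset.mem_Ico.1 hx).2) ?_).symm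
    intro x hx hx'
    have : x < k := by
      simp only [Finset.mem_range, Finset.mem_Ico] at hx hx'
      omega
    rw [Nat.choose_eq_zero_of_lt this, Nat.zero_mul]
  rw [h1, Finset.sum_Ico_eq_sum_range]
  have h2 : n + 1 - k = n - k + 1 := by omega
  rw [h2]
  have h3 : ∀ s ∈ range (n - k + 1),
      (k + s).choose k * (K.choose (k + s) * (N - K).choose (n - (k + s))) =
      K.choose k * ((K - k).choose s * (N - K).choose (n - k - s)) := by
    intro s hs
    have : K.choose (k + s) * (k + s).choose k = K.choose k * (K - k).choose (k + s - k) :=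
      myChooseMul (by omega)
    have h4 : k + s - k = s := by omega
    have h5 : n - (k + s) = n - k - s := by omega
    rw [h4] at this
    rw [h5]
    rw [← mul_assoc, mul_comm ((k + s).choose k) (K.choose (k + s)), this, mul_assoc]
  rw [Finset.sum_congr rfl h3, ← Finset.mul_sum, myVand (K - k) (N - K) (n - k)]
  rcases le_or_gt k K with h | h
  · have : K - k + (N - K) = N - k := by omega
    rw [this]
  · rw [Nat.choose_eq_zero_of_lt h, Nat.zero_mul, Nat.zero_mul]

/-- descending factorial inequality -/
lemma myDescF (N K : ℕ) (hK : K ≤ N) :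
    ∀ k, K.descFactorial k * N ^ k ≤ N.descFactorial k * K ^ k := by
  intro k
  induction k with
  | zero => simp
  | succ k ih =>
    rw [Nat.descFactorial_succ, Nat.descFactorial_succ, pow_succ, pow_succ]
    have hfac : (K - k) * N ≤ (N - k) * K := by
      calc (K - k) * N = K * N - k * N := by rw [Nat.sub_mul]
        _ ≤ K * N - k * K := by
            apply Nat.sub_le_sub_left
            exact Nat.mul_le_mul_left k hK
        _ = N * K - k * K := by rw [Nat.mul_comm K N]
        _ = (N - k) * K := by rw [Nat.sub_mul]
    set a := K - k
    set b := N - k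
    calc a * K.descFactorial k * (N ^ k * N) = (a * N) * (K.descFactorial k * N ^ k) := by
          ring
      _ ≤ (b * K) * (N.descFactorial k * K ^ k) := Nat.mul_le_mul hfac ih
      _ = b * N.descFactorial k * (K ^ k * K) := by ring

lemma myChoosePow (N K k : ℕ) (hK : K ≤ N) :
    K.choose k * N ^ k ≤ N.choose k * K ^ k := by
  have h := myDescF N K hK k
  rw [Nat.descFactorial_eq_factorial_mul_choose, Nat.descFactorial_eq_factorial_mul_choose] at h
  have := k.factorial_pos
  calc K.choose k * N ^ k = (k.factorial * (K.choose k * N ^ k)) / k.factorial := by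
        rw [Nat.mul_div_cancel_left _ this]
    _ ≤ (k.factorial * (N.choose k * K ^ k)) / k.factorial := by
        apply Nat.div_le_div_right
        rw [← mul_assoc, ← mul_assoc]
        nlinarith [h]
    _ = N.choose k * K ^ k := Nat.mul_div_cancel_left _ this

lemma myTermLe (N n K k : ℕ) (hN : 1 ≤ N) (hn : n ≤ N) (hK : K ≤ N) (hk : k ≤ n) :
    ((K.choose k * (N - k).choose (n - k) : ℕ) : ℝ) / (N.choose n : ℝ) ≤
      (n.choose k : ℝ) * ((K : ℝ) / (N : ℝ)) ^ k := by
  have hNn : (0 : ℝ) < (N.choose n : ℝ) := by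
    exact_mod_cast Nat.choose_pos hn
  have hNpos : (0 : ℝ) < (N : ℝ) := by exact_mod_cast hN
  have hrw : (n.choose k : ℝ) * ((K : ℝ) / (N : ℝ)) ^ k =
      ((n.choose k : ℝ) * (K : ℝ) ^ k) / (N : ℝ) ^ k := by
    rw [div_pow]; ring
  rw [hrw, div_le_div_iff₀ hNn (by positivity)]
  have key : (K.choose k * (N - k).choose (n - k)) * N ^ k ≤
      (n.choose k * K ^ k) * N.choose n := by
    have h1 : N.choose n * n.choose k = N.choose k * (N - k).choose (n - k) :=
      Nat.choose_mul (n := N) hk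
    calc (K.choose k * (N - k).choose (n - k)) * N ^ k
        = (K.choose k * N ^ k) * (N - k).choose (n - k) := by ring
      _ ≤ (N.choose k * K ^ k) * (N - k).choose (n - k) :=
          Nat.mul_le_mul_right _ (myChoosePow N K k hK)
      _ = (N.choose k * (N - k).choose (n - k)) * K ^ k := by ring
      _ = (N.choose n * n.choose k) * K ^ k := by rw [h1]
      _ = (n.choose k * K ^ k) * N.choose n := by ring
  calc ((K.choose k * (N - k).choose (n - k) : ℕ) : ℝ) * (N : ℝ) ^ k
      = (((K.choose k * (N - k).choose (n - k)) * N ^ k : ℕ) : ℝ) := by push_cast; ring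
    _ ≤ (((n.choose k * K ^ k) * N.choose n : ℕ) : ℝ) := by exact_mod_cast key
    _ = (n.choose k : ℝ) * (K : ℝ) ^ k * (N.choose n : ℝ) := by push_cast; ring

theorem stmt1 (N n K : ℕ) (hN : 1 ≤ N) (hn : n ≤ N) (hK : K ≤ N)
    (c : ℝ) (hc : 1 ≤ c) :
    ∑ t ∈ Finset.range (n + 1),
        c ^ t * ((K.choose t * (N - K).choose (n - t) : ℕ) : ℝ) / (N.choose n : ℝ) ≤
    ∑ t ∈ Finset.range (n + 1),
        c ^ t * (n.choose t : ℝ) * ((K : ℝ) / (N : ℝ)) ^ t *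
          (1 - (K : ℝ) / (N : ℝ)) ^ (n - t) := by
  set d : ℝ := c - 1 with hd
  have hd0 : 0 ≤ d := by simp [hd]; linarith
  set p : ℝ := (K : ℝ) / (N : ℝ) with hp
  -- RHS equals ∑ d^k * p^k * C(n,k)
  have hRHS : ∑ t ∈ Finset.range (n + 1),
      c ^ t * (n.choose t : ℝ) * p ^ t * (1 - p) ^ (n - t) =
      ∑ k ∈ Finset.range (n + 1), d ^ k * p ^ k * (n.choose k : ℝ) := by
    have h1 : ∑ t ∈ Finset.range (n + 1),
        c ^ t * (n.choose t : ℝ) * p ^ t * (1 - p) ^ (n - t) =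
        ∑ t ∈ Finset.range (n + 1), (c * p) ^ t * (1 - p) ^ (n - t) * (n.choose t : ℝ) := by
      apply Finset.sum_congr rfl; intro t _; rw [mul_pow]; ring
    rw [h1, ← add_pow (c * p) (1 - p) n]
    have h2 : c * p + (1 - p) = d * p + 1 := by ring
    rw [h2, add_pow (d * p) 1 n]
    apply Finset.sum_congr rfl; intro k _
    rw [mul_pow, one_pow]; ring
  rw [hRHS]
  -- LHS equals ∑ d^k * C(K,k)*C(N-k,n-k)/C(N,n)
  have hLHS : ∑ t ∈ Finset.range (n + 1),
      c ^ t * ((K.choose t * (N - K).choose (n - t) : ℕ) : ℝ) / (N.choose n : ℝ) =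
      ∑ k ∈ Finset.range (n + 1),
        d ^ k * ((K.choose k * (N - k).choose (n - k) : ℕ) : ℝ) / (N.choose n : ℝ) := by
    have hc' : ∀ t : ℕ, c ^ t = ∑ k ∈ Finset.range (t + 1), d ^ k * (t.choose k : ℝ) := by
      intro t
      have : c = d + 1 := by ring
      rw [this, add_pow d 1 t]
      apply Finset.sum_congr rfl; intro k _; rw [one_pow]; ring
    have h1 : ∀ t ∈ Finset.range (n + 1),
        c ^ t * ((K.choose t * (N - K).choose (n - t) : ℕ) : ℝ) / (N.choose n : ℝ) =
        ∑ k ∈ Finset.range (n + 1),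
          d ^ k * (t.choose k : ℝ) * ((K.choose t * (N - K).choose (n - t) : ℕ) : ℝ)
            / (N.choose n : ℝ) := by
      intro t ht
      rw [hc', Finset.sum_mul, Finset.sum_div]
      refine Finset.sum_subset ?_ ?_
      · intro x hx
        simp only [Finset.mem_range] at ht hx ⊢
        omega
      · intro x hx hx'
        simp only [Finset.mem_range] at hx hx'
        rw [Nat.choose_eq_zero_of_lt (show t < x by omega)]
        simp
    rw [Finset.sum_congr rfl h1, Finset.sum_comm]
    apply Finset.sum_congr rfl
    intro k hk
    simp only [Finset.mem_range] at hk
    have hkn : k ≤ n := by omega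
    have := myInnerSum N n K k hK hkn
    calc ∑ t ∈ Finset.range (n + 1),
          d ^ k * (t.choose k : ℝ) * ((K.choose t * (N - K).choose (n - t) : ℕ) : ℝ)
            / (N.choose n : ℝ)
        = d ^ k * ((∑ t ∈ Finset.range (n + 1),
            (t.choose k : ℝ) * ((K.choose t * (N - K).choose (n - t) : ℕ) : ℝ))
            / (N.choose n : ℝ)) := by
          rw [← mul_div_assoc, Finset.mul_sum, Finset.sum_div]
          apply Finset.sum_congr rfl; intro t _; ring
      _ = d ^ k * ((K.choose k * (N - k).choose (n - k) : ℕ) : ℝ) / (N.choose n : ℝ) := by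
          rw [mul_div_assoc]
          congr 1
          rw [← this]
          push_cast
          ring
  rw [hLHS]
  apply Finset.sum_le_sum
  intro k hk
  simp only [Finset.mem_range] at hk
  have hkn : k ≤ n := by omega
  rw [mul_div_assoc]
  have := myTermLe N n K k hN hn hK hkn
  calc d ^ k * (((K.choose k * (N - k).choose (n - k) : ℕ) : ℝ) / (N.choose n : ℝ))
      ≤ d ^ k * ((n.choose k : ℝ) * p ^ k) := by
        apply mul_le_mul_of_nonneg_left this (by positivity)
    _ = d ^ k * p ^ k * (n.choose k : ℝ) := by ring
end

section
/- For all natural numbers N, K, n, k with K ≤ N, n ≤ N and k ≤ n, the identity Σ_{t=0}^{n} C(t,k)·C(K,t)·C(N−K, n−t) = C(K,k)·C(N−k, n−k) holds. (Dividing by C(N,n), this computes the k-th binomial moment E(C(Z,k)) = C(n,k)·C(K,k)/C(N,k) of a hypergeometric random variable Z ∼ Hypergeom(N, K, n).) -/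
lemma aux_choose (K k s : ℕ) (h : k ≤ K) :
    (k + s).choose k * K.choose (k + s) = K.choose k * (K - k).choose s := by
  by_cases hs : k + s ≤ K
  · rw [mul_comm, Nat.choose_mul (Nat.le_add_right k s), Nat.add_sub_cancel_left]
  · rw [Nat.choose_eq_zero_of_lt (Nat.lt_of_not_le hs),
      Nat.choose_eq_zero_of_lt (by omega : K - k < s)]
    simp

lemma vander (a b m : ℕ) :
    ∑ s ∈ Finset.range (m + 1), a.choose s * b.choose (m - s) = (a + b).choose m := by
  rw [Nat.add_choose_eq, Finset.Nat.sum_antidiagonal_eq_sum_range_succ_mk]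

theorem stmt2 (N K n k : ℕ) (hK : K ≤ N) (hn : n ≤ N) (hk : k ≤ n) :
    ∑ t ∈ Finset.range (n + 1),
        t.choose k * (K.choose t * (N - K).choose (n - t)) =
      K.choose k * (N - k).choose (n - k) := by
  by_cases hKk : k ≤ K
  · obtain ⟨m, rfl⟩ : ∃ m, n = k + m := ⟨n - k, by omega⟩
    rw [show k + m + 1 = k + (m + 1) by ring, Finset.sum_range_add]
    have h1 : ∑ t ∈ Finset.range k, t.choose k * (K.choose t * (N - K).choose (k + m - t)) = 0 := by
      apply Finset.sum_eq_zero
      intro t ht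
      rw [Nat.choose_eq_zero_of_lt (Finset.mem_range.mp ht)]
      ring
    rw [h1, zero_add]
    have h2 : ∀ s ∈ Finset.range (m + 1),
        (k + s).choose k * (K.choose (k + s) * (N - K).choose (k + m - (k + s))) =
        K.choose k * ((K - k).choose s * (N - K).choose (m - s)) := by
      intro s _
      rw [← mul_assoc, aux_choose K k s hKk, show k + m - (k + s) = m - s by omega, mul_assoc]
    rw [Finset.sum_congr rfl h2, ← Finset.mul_sum, vander,
      show K - k + (N - K) = N - k by omega, show k + m - k = m by omega]
  · rw [Nat.choose_eq_zero_of_lt (by omega : K < k), zero_mul]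
    apply Finset.sum_eq_zero
    intro t _
    by_cases htK : t ≤ K
    · rw [Nat.choose_eq_zero_of_lt (by omega : t < k)]; ring
    · rw [Nat.choose_eq_zero_of_lt (by omega : K < t)]; ring
end

section
/- Let n ≥ 2 and k ≥ 2 be integers with k ≤ n, let b be a natural number with b ≤ C(n,2), and set p = b/C(n,2) as a real number. If n^k · ((1+p)/2)^{k(k−1)/2} < 1, then there exists a semicomplete digraph on n vertices with exactly b bioriented pairs that contains no transitive subtournament on k vertices. (This yields the bound F_p(n) < (2/log₂(2/(1+p)))·log₂ n + 1 of Theorem 2.4.) -/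
/-- A semicomplete digraph on `{0,…,n-1}`: loopless, and for every pair of
distinct vertices at least one of the two arcs is present. -/
structure SemicompleteDigraph (n : ℕ) where
  arc : Fin n → Fin n → Bool
  loopless : ∀ i, arc i i = false
  total : ∀ i j, i ≠ j → arc i j = true ∨ arc j i = true

/-- The number of bioriented unordered pairs (both arcs present). -/
def SemicompleteDigraph.biorientedCount {n : ℕ} (G : SemicompleteDigraph n) : ℕ :=
  (Finset.univ.filter fun p : Fin n × Fin n =>
    p.1 < p.2 ∧ G.arc p.1 p.2 = true ∧ G.arc p.2 p.1 = true).card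

/-- The number of one-way unordered pairs (exactly one arc present). -/
def SemicompleteDigraph.oneWayCount {n : ℕ} (G : SemicompleteDigraph n) : ℕ :=
  (Finset.univ.filter fun p : Fin n × Fin n =>
    p.1 < p.2 ∧ ¬(G.arc p.1 p.2 = true ∧ G.arc p.2 p.1 = true)).card

/-- `S` carries a transitive subtournament: there is a linear ordering of `S` such
that the arc `(u,v)` is present whenever `u` precedes `v`. -/
def SemicompleteDigraph.HasTransTournOn {n : ℕ} (G : SemicompleteDigraph n)
    (S : Finset (Fin n)) : Prop :=
  ∃ l : List (Fin n), l.Nodup ∧ l.toFinset = S ∧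
    l.Pairwise fun u v => G.arc u v = true

open Finset

def pairsF (n : ℕ) : Finset (Fin n × Fin n) := Finset.univ.filter fun p => p.1 < p.2

lemma pairsF_card (n : ℕ) : (pairsF n).card = n.choose 2 := by
  have h : (pairsF n).card
      = ∑ j : Fin n, ((pairsF n).filter fun p => p.2 = j).card :=
    Finset.card_eq_sum_card_fiberwise (fun p _ => Finset.mem_univ _)
  have h2 : ∀ j : Fin n, ((pairsF n).filter fun p => p.2 = j).card = (j : ℕ) := by
    intro j
    have : ((pairsF n).filter fun p => p.2 = j) = (Finset.univ.filter fun i : Fin n => i < j).image (fun i => (i, j)) := by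
      ext p
      simp only [pairsF, Finset.mem_filter, Finset.mem_univ, true_and, Finset.mem_image]
      constructor
      · rintro ⟨hlt, rfl⟩; exact ⟨p.1, hlt, rfl⟩
      · rintro ⟨i, hi, rfl⟩; exact ⟨hi, rfl⟩
    rw [this, Finset.card_image_of_injective _ (fun a b hab => (Prod.mk.injEq _ _ _ _ ▸ hab).1)]
    have : (Finset.univ.filter fun i : Fin n => i < j) = Finset.Iio j := by
      ext i; simp
    rw [this, Fin.card_Iio]
  rw [h]
  have h3 : ∑ j : Fin n, ((pairsF n).filter fun p => p.2 = j).card = ∑ j ∈ Finset.range n, j := by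
    rw [Finset.sum_congr rfl fun j _ => h2 j]
    exact (Fin.sum_univ_eq_sum_range (fun j => j) n)
  rw [h3]
  have := Finset.sum_range_id_mul_two n
  have h4 := Nat.choose_two_right n
  omega

lemma choose_desc_ineq : ∀ (j b N : ℕ), j ≤ b → b ≤ N →
    (N - j).choose (b - j) * N ^ j ≤ b ^ j * N.choose b := by
  intro j
  induction j with
  | zero => intro b N _ _; simp
  | succ j ih =>
    intro b N hjb hbN
    have hjb' : j < b := hjb
    have hjN : j < N := lt_of_lt_of_le hjb' hbN
    have key : (N - j) * (N - j - 1).choose (b - j - 1) = (N - j).choose (b - j) * (b - j) := by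
      have := Nat.add_one_mul_choose_eq (N - j - 1) (b - j - 1)
      have e1 : N - j - 1 + 1 = N - j := by omega
      have e2 : b - j - 1 + 1 = b - j := by omega
      rw [e1, e2] at this
      exact this
    have hpos : 0 < N - j := by omega
    apply Nat.le_of_mul_le_mul_right _ hpos
    have e3 : N - (j + 1) = N - j - 1 := by omega
    have e4 : b - (j + 1) = b - j - 1 := by omega
    calc (N - (j+1)).choose (b - (j+1)) * N ^ (j+1) * (N - j)
        = (N - j) * (N - j - 1).choose (b - j - 1) * N ^ (j+1) := by rw [e3, e4]; ring
      _ = (N - j).choose (b - j) * (b - j) * N ^ (j+1) := by rw [key]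
      _ = ((N - j).choose (b - j) * N ^ j) * ((b - j) * N) := by ring
      _ ≤ (b ^ j * N.choose b) * ((N - j) * b) := by
          apply Nat.mul_le_mul (ih b N hjb'.le hbN)
          have h1 : j * b ≤ j * N := Nat.mul_le_mul_left j hbN
          have h2 : b * N = N * b := Nat.mul_comm b N
          have e5 : (b - j) * N = b * N - j * N := Nat.sub_mul b j N
          have e6 : (N - j) * b = N * b - j * b := Nat.sub_mul N j b
          have h3 : j * N ≤ b * N := Nat.mul_le_mul_right N hjb'.le
          omega
      _ = b ^ (j+1) * N.choose b * (N - j) := by ring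

lemma count_supersets {α : Type*} [DecidableEq α] (P S : Finset α) (hS : S ⊆ P) (b : ℕ)
    (hjb : S.card ≤ b) :
    (((P.powersetCard b)).filter (fun B => S ⊆ B)).card
      = (P.card - S.card).choose (b - S.card) := by
  rw [show (P.card - S.card) = (P \ S).card from (Finset.card_sdiff_of_subset hS).symm,
    ← Finset.card_powersetCard (b - S.card) (P \ S)]
  apply Finset.card_bij' (fun B _ => B \ S) (fun C _ => C ∪ S)
  · intro B hB
    simp only [Finset.mem_filter, Finset.mem_powersetCard] at hB
    obtain ⟨⟨hBP, hBcard⟩, hSB⟩ := hB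
    rw [Finset.mem_powersetCard]
    exact ⟨Finset.sdiff_subset_sdiff hBP (le_refl S), by rw [Finset.card_sdiff_of_subset hSB, hBcard]⟩
  · intro C hC
    rw [Finset.mem_powersetCard] at hC
    obtain ⟨hCP, hCcard⟩ := hC
    have hdisj : Disjoint C S := Finset.disjoint_of_subset_left hCP Finset.sdiff_disjoint
    simp only [Finset.mem_filter, Finset.mem_powersetCard]
    refine ⟨⟨Finset.union_subset (hCP.trans Finset.sdiff_subset) hS, ?_⟩, Finset.subset_union_right⟩
    rw [Finset.card_union_of_disjoint hdisj, hCcard]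
    omega
  · intro B hB
    simp only [Finset.mem_filter] at hB
    exact Finset.sdiff_union_of_subset hB.2
  · intro C hC
    rw [Finset.mem_powersetCard] at hC
    have hdisj : Disjoint C S := Finset.disjoint_of_subset_left hC.1 Finset.sdiff_disjoint
    exact Finset.union_sdiff_cancel_right hdisj

lemma count_fun_agree {α : Type*} [Fintype α] [DecidableEq α] (D : Finset α) (τ : α → Bool) :
    (Finset.univ.filter (fun σ : α → Bool => ∀ q ∈ D, σ q = τ q)).card
      ≤ 2 ^ (Fintype.card α - D.card) := by
  have hinj : Set.InjOn (fun (σ : α → Bool) => (fun q : {x // x ∈ Dᶜ} => σ q.1))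
      ↑(Finset.univ.filter (fun σ : α → Bool => ∀ q ∈ D, σ q = τ q)) := by
    intro σ₁ h₁ σ₂ h₂ hE
    simp only [Finset.coe_filter, Set.mem_setOf_eq, Finset.mem_univ, true_and] at h₁ h₂
    funext q
    by_cases hq : q ∈ D
    · rw [h₁ q hq, h₂ q hq]
    · exact congrFun hE ⟨q, by simpa using hq⟩
  calc _ ≤ (Finset.univ : Finset ({x // x ∈ Dᶜ} → Bool)).card :=
        Finset.card_le_card_of_injOn _ (fun _ _ => Finset.mem_univ _) hinj
    _ = 2 ^ (Fintype.card α - D.card) := by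
        rw [Finset.card_univ, Fintype.card_fun, Fintype.card_coe, Finset.card_compl,
          Fintype.card_bool]

lemma count_supersets_le {α : Type*} [DecidableEq α] (P S : Finset α) (hS : S ⊆ P) (b : ℕ)
    (hb : b ≤ P.card) (hP : 0 < P.card) :
    ((((P.powersetCard b)).filter (fun B => S ⊆ B)).card : ℝ)
      ≤ ((b : ℝ) / (P.card : ℝ)) ^ S.card * ((P.card).choose b : ℝ) := by
  by_cases hjb : S.card ≤ b
  · rw [count_supersets P S hS b hjb]
    have hN : (0 : ℝ) < (P.card : ℝ) := by exact_mod_cast hP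
    have key := choose_desc_ineq S.card b P.card hjb hb
    have keyR : ((P.card - S.card).choose (b - S.card) : ℝ) * (P.card : ℝ) ^ S.card
        ≤ (b : ℝ) ^ S.card * ((P.card).choose b : ℝ) := by exact_mod_cast key
    rw [div_pow, div_mul_eq_mul_div, le_div_iff₀ (by positivity)]
    linarith [keyR]
  · have : ((P.powersetCard b)).filter (fun B => S ⊆ B) = ∅ := by
      apply Finset.filter_false_of_mem
      intro B hB hSB
      rw [Finset.mem_powersetCard] at hB
      exact hjb (hB.2 ▸ Finset.card_le_card hSB)
    rw [this]
    simp only [Finset.card_empty, Nat.cast_zero]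
    positivity

def arcOf {n : ℕ} (B : Finset (Fin n × Fin n)) (σ : Fin n × Fin n → Bool) (i j : Fin n) : Bool :=
  if i < j then (if (i, j) ∈ B then true else σ (i, j))
  else if j < i then (if (j, i) ∈ B then true else !σ (j, i))
  else false

def GOf {n : ℕ} (B : Finset (Fin n × Fin n)) (σ : Fin n × Fin n → Bool) :
    SemicompleteDigraph n where
  arc := arcOf B σ
  loopless := by intro i; simp [arcOf]
  total := by
    intro i j hij
    rcases lt_or_gt_of_ne hij with hlt | hgt
    · by_cases hB : (i, j) ∈ B
      · left; simp [arcOf, hlt, hB]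
      · by_cases hσ : σ (i, j) = true
        · left; simp [arcOf, hlt, hB, hσ]
        · right; simp [arcOf, hlt, not_lt_of_gt hlt, hB]
          simp at hσ; simp [hσ]
    · by_cases hB : (j, i) ∈ B
      · left; simp [arcOf, hgt, not_lt_of_gt hgt, hB]
      · by_cases hσ : σ (j, i) = true
        · right; simp [arcOf, hgt, hB, hσ]
        · left; simp [arcOf, hgt, not_lt_of_gt hgt, hB]
          simp at hσ; simp [hσ]

lemma GOf_bioriented {n : ℕ} (B : Finset (Fin n × Fin n)) (σ : Fin n × Fin n → Bool)
    (hB : B ⊆ pairsF n) : (GOf B σ).biorientedCount = B.card := by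
  unfold SemicompleteDigraph.biorientedCount
  congr 1
  ext p
  simp only [Finset.mem_filter, Finset.mem_univ, true_and]
  constructor
  · rintro ⟨hlt, h12, h21⟩
    by_contra hpB
    have : (GOf B σ).arc p.2 p.1 = !σ (p.1, p.2) := by
      simp [GOf, arcOf, hlt, not_lt_of_gt hlt, hpB]
    have h12' : (GOf B σ).arc p.1 p.2 = σ (p.1, p.2) := by
      simp [GOf, arcOf, hlt, hpB]
    rw [h12'] at h12
    rw [this, h12] at h21
    simp at h21
  · intro hpB
    have hlt : p.1 < p.2 := by
      have := hB hpB
      simpa [pairsF] using this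
    refine ⟨hlt, ?_, ?_⟩
    · simp [GOf, arcOf, hlt, hpB]
    · simp [GOf, arcOf, hlt, not_lt_of_gt hlt, hpB]

def sortp {n : ℕ} (a c : Fin n) : Fin n × Fin n := if a < c then (a, c) else (c, a)

def Mf {n k : ℕ} (f : Fin k → Fin n) : Finset (Fin n × Fin n) :=
  (pairsF k).image (fun q => sortp (f q.1) (f q.2))

def τf {n k : ℕ} (f : Fin k → Fin n) : Fin n × Fin n → Bool :=
  fun q => decide (∃ i j : Fin k, i < j ∧ f i = q.1 ∧ f j = q.2)

lemma Mf_subset {n k : ℕ} (f : Fin k → Fin n) (hf : Function.Injective f) :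
    Mf f ⊆ pairsF n := by
  intro q hq
  simp only [Mf, Finset.mem_image] at hq
  obtain ⟨r, hr, rfl⟩ := hq
  have hlt : r.1 < r.2 := by simpa [pairsF] using hr
  have hne : f r.1 ≠ f r.2 := fun h => absurd (hf h) (ne_of_lt hlt)
  rcases lt_or_gt_of_ne hne with h | h
  · simp [sortp, h, pairsF]
  · simp [sortp, not_lt_of_gt h, pairsF, h]

lemma Mf_card {n k : ℕ} (f : Fin k → Fin n) (hf : Function.Injective f) :
    (Mf f).card = k.choose 2 := by
  rw [Mf, Finset.card_image_of_injOn, pairsF_card]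
  intro q hq r hr hqr
  have hq1 : q.1 < q.2 := by simpa [pairsF] using hq
  have hr1 : r.1 < r.2 := by simpa [pairsF] using hr
  have hqe : f q.1 ≠ f q.2 := fun h => absurd (hf h) (ne_of_lt hq1)
  have hre : f r.1 ≠ f r.2 := fun h => absurd (hf h) (ne_of_lt hr1)
  have key : (f q.1 = f r.1 ∧ f q.2 = f r.2) ∨ (f q.1 = f r.2 ∧ f q.2 = f r.1) := by
    simp only [sortp] at hqr
    split_ifs at hqr with h1 h2 h2
    · exact Or.inl ⟨(Prod.mk.injEq _ _ _ _ ▸ hqr).1, (Prod.mk.injEq _ _ _ _ ▸ hqr).2⟩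
    · exact Or.inr ⟨(Prod.mk.injEq _ _ _ _ ▸ hqr).1, (Prod.mk.injEq _ _ _ _ ▸ hqr).2⟩
    · exact Or.inr ⟨(Prod.mk.injEq _ _ _ _ ▸ hqr).2, (Prod.mk.injEq _ _ _ _ ▸ hqr).1⟩
    · exact Or.inl ⟨(Prod.mk.injEq _ _ _ _ ▸ hqr).2, (Prod.mk.injEq _ _ _ _ ▸ hqr).1⟩
  rcases key with ⟨h1, h2⟩ | ⟨h1, h2⟩
  · exact Prod.ext (hf h1) (hf h2)
  · have e1 := hf h1
    have e2 := hf h2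
    exfalso
    rw [e1] at hq1
    rw [e2] at hq1
    exact absurd (hq1.trans hr1) (lt_irrefl _)

lemma key_forced {n k : ℕ} (f : Fin k → Fin n) (hf : Function.Injective f)
    (B : Finset (Fin n × Fin n)) (σ : Fin n × Fin n → Bool)
    (harc : ∀ i j : Fin k, i < j → arcOf B σ (f i) (f j) = true) :
    ∀ q ∈ Mf f, q ∈ B ∨ σ q = τf f q := by
  intro q hq
  simp only [Mf, Finset.mem_image] at hq
  obtain ⟨r, hr, rfl⟩ := hq
  have hij : r.1 < r.2 := by simpa [pairsF] using hr
  have hne : f r.1 ≠ f r.2 := fun h => absurd (hf h) (ne_of_lt hij)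
  have ha := harc r.1 r.2 hij
  rcases lt_or_gt_of_ne hne with h | h
  · -- sortp = (f r.1, f r.2), τ = true
    have hs : sortp (f r.1) (f r.2) = (f r.1, f r.2) := by simp [sortp, h]
    rw [hs]
    by_cases hB : (f r.1, f r.2) ∈ B
    · exact Or.inl hB
    · right
      have : arcOf B σ (f r.1) (f r.2) = σ (f r.1, f r.2) := by simp [arcOf, h, hB]
      rw [this] at ha
      have hτ : τf f (f r.1, f r.2) = true := by
        simp only [τf, decide_eq_true_eq]
        exact ⟨r.1, r.2, hij, rfl, rfl⟩
      rw [ha, hτ]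
  · -- sortp = (f r.2, f r.1), τ = false
    have hs : sortp (f r.1) (f r.2) = (f r.2, f r.1) := by
      simp [sortp, not_lt_of_gt h]
    rw [hs]
    by_cases hB : (f r.2, f r.1) ∈ B
    · exact Or.inl hB
    · right
      have : arcOf B σ (f r.1) (f r.2) = !σ (f r.2, f r.1) := by
        simp [arcOf, not_lt_of_gt h, h, hB]
      rw [this] at ha
      have hτ : τf f (f r.2, f r.1) = false := by
        simp only [τf, decide_eq_false_iff_not]
        rintro ⟨i, j, hij', hi, hj⟩
        have : i = r.2 := hf hi
        have : j = r.1 := hf hj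
        subst i; subst j
        exact absurd (hij'.trans hij) (lt_irrefl _)
      rw [hτ]
      simpa using ha

def ΩAll (n b : ℕ) : Finset (Finset (Fin n × Fin n) × ((Fin n × Fin n) → Bool)) :=
  ((pairsF n).powersetCard b) ×ˢ Finset.univ

def Ωf (n k b : ℕ) (f : Fin k → Fin n) :
    Finset (Finset (Fin n × Fin n) × ((Fin n × Fin n) → Bool)) :=
  (ΩAll n b).filter fun c => ∀ i j : Fin k, i < j → arcOf c.1 c.2 (f i) (f j) = true

lemma ΩAll_card (n b : ℕ) : (ΩAll n b).card = (n.choose 2).choose b * 2 ^ (n * n) := by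
  rw [ΩAll, Finset.card_product, Finset.card_powersetCard, pairsF_card, Finset.card_univ,
    Fintype.card_fun, Fintype.card_bool, Fintype.card_prod, Fintype.card_fin]

lemma m_le_nn (n k : ℕ) (hkn : k ≤ n) : k.choose 2 ≤ n * n := by
  have h1 : k.choose 2 ≤ n.choose 2 := Nat.choose_le_choose 2 hkn
  have h2 : n.choose 2 = n * (n - 1) / 2 := Nat.choose_two_right n
  have h3 : n * (n - 1) ≤ n * n := Nat.mul_le_mul_left n (Nat.sub_le n 1)
  omega

lemma Ωf_card_le (n k b : ℕ) (hkn : k ≤ n) (hn : 2 ≤ n) (hb : b ≤ n.choose 2)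
    (f : Fin k → Fin n) (hf : Function.Injective f) :
    ((Ωf n k b f).card : ℝ)
      ≤ ((1 + (b : ℝ) / (n.choose 2 : ℝ)) / 2) ^ (k.choose 2) * 2 ^ (n * n)
        * ((n.choose 2).choose b : ℝ) := by
  set M := Mf f with hM
  set m := k.choose 2 with hm
  set N := n.choose 2 with hN
  have hMcard : M.card = m := Mf_card f hf
  have hMP : M ⊆ pairsF n := Mf_subset f hf
  have hNpos : 0 < N := Nat.choose_pos (by omega)
  have hmnn : m ≤ n * n := m_le_nn n k hkn
  set Sσ : Finset (Fin n × Fin n) → Finset ((Fin n × Fin n) → Bool) :=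
    fun B => Finset.univ.filter fun σ => ∀ q ∈ M \ B, σ q = τf f q with hSσ
  -- Step 1: union bound over B
  have step1 : (Ωf n k b f).card ≤
      ∑ B ∈ (pairsF n).powersetCard b, (Sσ B).card := by
    have hsub : Ωf n k b f ⊆
        ((pairsF n).powersetCard b).biUnion (fun B => {B} ×ˢ Sσ B) := by
      intro c hc
      simp only [Ωf, ΩAll, Finset.mem_filter, Finset.mem_product] at hc
      obtain ⟨⟨hB, _⟩, harc⟩ := hc
      rw [Finset.mem_biUnion]
      refine ⟨c.1, hB, ?_⟩
      rw [Finset.mem_product]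
      refine ⟨Finset.mem_singleton_self _, ?_⟩
      simp only [hSσ, Finset.mem_filter, Finset.mem_univ, true_and]
      intro q hq
      rw [Finset.mem_sdiff] at hq
      rcases key_forced f hf c.1 c.2 harc q hq.1 with h | h
      · exact absurd h hq.2
      · exact h
    calc (Ωf n k b f).card ≤ _ := Finset.card_le_card hsub
      _ ≤ ∑ B ∈ (pairsF n).powersetCard b, ({B} ×ˢ Sσ B).card := Finset.card_biUnion_le
      _ = ∑ B ∈ (pairsF n).powersetCard b, (Sσ B).card := by
          apply Finset.sum_congr rfl
          intro B _
          rw [Finset.card_product, Finset.card_singleton, one_mul]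
  -- Step 2+3: per-B bound
  have step2 : ∀ B ∈ (pairsF n).powersetCard b,
      (Sσ B).card ≤ 2 ^ (n * n - m) * 2 ^ ((M ∩ B).card) := by
    intro B _
    have h1 : (Sσ B).card ≤ 2 ^ (Fintype.card (Fin n × Fin n) - (M \ B).card) :=
      count_fun_agree (M \ B) (τf f)
    have hcardsplit : (M ∩ B).card + (M \ B).card = m := by
      rw [← hMcard]; exact Finset.card_inter_add_card_sdiff M B
    have hFc : Fintype.card (Fin n × Fin n) = n * n := by
      rw [Fintype.card_prod, Fintype.card_fin]
    rw [hFc] at h1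
    have hMB : (M ∩ B).card ≤ m := by omega
    have : n * n - (M \ B).card = (n * n - m) + (M ∩ B).card := by omega
    rw [this, pow_add] at h1
    exact h1
  -- Step 4: swap sums
  have step4 : ∑ B ∈ (pairsF n).powersetCard b, 2 ^ ((M ∩ B).card)
      = ∑ S ∈ M.powerset,
          (((pairsF n).powersetCard b).filter (fun B => S ⊆ B)).card := by
    have hper : ∀ B, (2 : ℕ) ^ ((M ∩ B).card)
        = ∑ S ∈ M.powerset, if S ⊆ B then 1 else 0 := by
      intro B
      rw [← Finset.sum_filter]
      have : M.powerset.filter (fun S => S ⊆ B) = (M ∩ B).powerset := by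
        ext S
        simp only [Finset.mem_filter, Finset.mem_powerset, Finset.subset_inter_iff]
      rw [this]
      rw [Finset.sum_const, smul_eq_mul, mul_one, Finset.card_powerset]
    rw [Finset.sum_congr rfl fun B _ => hper B, Finset.sum_comm]
    apply Finset.sum_congr rfl
    intro S _
    rw [← Finset.sum_filter]
    simp
  -- now real-valued chain
  have hsum : ((Ωf n k b f).card : ℝ)
      ≤ (2 : ℝ) ^ (n * n - m) * ∑ S ∈ M.powerset,
          ((((pairsF n).powersetCard b).filter (fun B => S ⊆ B)).card : ℝ) := by
    have hNat : (Ωf n k b f).card ≤ 2 ^ (n * n - m) *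
        ∑ S ∈ M.powerset, (((pairsF n).powersetCard b).filter (fun B => S ⊆ B)).card := by
      calc (Ωf n k b f).card ≤ ∑ B ∈ (pairsF n).powersetCard b, (Sσ B).card := step1
        _ ≤ ∑ B ∈ (pairsF n).powersetCard b, 2 ^ (n * n - m) * 2 ^ ((M ∩ B).card) :=
            Finset.sum_le_sum step2
        _ = 2 ^ (n * n - m) * ∑ B ∈ (pairsF n).powersetCard b, 2 ^ ((M ∩ B).card) := by
            rw [Finset.mul_sum]
        _ = _ := by rw [step4]
    calc ((Ωf n k b f).card : ℝ) ≤ ((2 ^ (n * n - m) *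
        ∑ S ∈ M.powerset, (((pairsF n).powersetCard b).filter (fun B => S ⊆ B)).card : ℕ) : ℝ) :=
          by exact_mod_cast hNat
      _ = _ := by push_cast; ring
  have step5 : ∑ S ∈ M.powerset,
        ((((pairsF n).powersetCard b).filter (fun B => S ⊆ B)).card : ℝ)
      ≤ (1 + (b : ℝ) / (N : ℝ)) ^ m * (N.choose b : ℝ) := by
    have hbound : ∀ S ∈ M.powerset,
        ((((pairsF n).powersetCard b).filter (fun B => S ⊆ B)).card : ℝ)
          ≤ ((b : ℝ) / (N : ℝ)) ^ S.card * (N.choose b : ℝ) := by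
      intro S hS
      rw [Finset.mem_powerset] at hS
      have := count_supersets_le (pairsF n) S (hS.trans hMP) b
        (by rw [pairsF_card]; exact hb) (by rw [pairsF_card]; exact hNpos)
      rwa [pairsF_card] at this
    calc _ ≤ ∑ S ∈ M.powerset, ((b : ℝ) / (N : ℝ)) ^ S.card * (N.choose b : ℝ) :=
          Finset.sum_le_sum hbound
      _ = (1 + (b : ℝ) / (N : ℝ)) ^ m * (N.choose b : ℝ) := by
          rw [Finset.sum_powerset_apply_card (fun j => ((b : ℝ) / (N : ℝ)) ^ j * (N.choose b : ℝ))]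
          rw [hMcard]
          have := add_pow ((b : ℝ) / (N : ℝ)) 1 m
          simp only [one_pow, mul_one] at this
          rw [add_comm (1 : ℝ) ((b : ℝ) / (N : ℝ)), this, Finset.sum_mul]
          apply Finset.sum_congr rfl
          intro j _
          rw [nsmul_eq_mul]
          ring
  -- combine
  have hfinal : ((Ωf n k b f).card : ℝ)
      ≤ (2 : ℝ) ^ (n * n - m) * ((1 + (b : ℝ) / (N : ℝ)) ^ m * (N.choose b : ℝ)) := by
    calc _ ≤ _ := hsum
      _ ≤ _ := by
        apply mul_le_mul_of_nonneg_left step5 (by positivity)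
  calc ((Ωf n k b f).card : ℝ) ≤ _ := hfinal
    _ = ((1 + (b : ℝ) / (N : ℝ)) / 2) ^ m * 2 ^ (n * n) * (N.choose b : ℝ) := by
        rw [div_pow]
        have h2 : (2 : ℝ) ^ (n * n - m) = 2 ^ (n * n) / 2 ^ m := by
          rw [eq_div_iff (by positivity), ← pow_add]
          congr 1
          omega
        rw [h2]
        ring

theorem stmt5 (n k b : ℕ) (hn : 2 ≤ n) (hk : 2 ≤ k) (hkn : k ≤ n)
    (hb : b ≤ n.choose 2)
    (h : (n : ℝ) ^ k * ((1 + (b : ℝ) / (n.choose 2 : ℝ)) / 2) ^ (k * (k - 1) / 2) < 1) :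
    ∃ G : SemicompleteDigraph n, G.biorientedCount = b ∧
      ∀ S : Finset (Fin n), S.card = k → ¬ G.HasTransTournOn S := by
  by_contra hcon
  push_neg at hcon
  have hcon' : ∀ B : Finset (Fin n × Fin n), ∀ σ : Fin n × Fin n → Bool,
      B ⊆ pairsF n → B.card = b →
      ∃ S : Finset (Fin n), S.card = k ∧ (GOf B σ).HasTransTournOn S := by
    intro B σ hBP hBc
    have := hcon (GOf B σ) (by rw [GOf_bioriented B σ hBP, hBc])
    exact this
  set N := n.choose 2 with hN
  set m := k.choose 2 with hm
  have hmkk : m = k * (k - 1) / 2 := Nat.choose_two_right k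
  set T : Finset (Fin k → Fin n) :=
    Finset.univ.filter (fun f => Function.Injective f) with hT
  -- ΩAll is covered by the Ωf's
  have hcover : ΩAll n b ⊆ T.biUnion (fun f => Ωf n k b f) := by
    intro c hc
    have hc' := hc
    simp only [ΩAll, Finset.mem_product, Finset.mem_powersetCard] at hc'
    obtain ⟨⟨hBP, hBc⟩, -⟩ := hc'
    obtain ⟨S, hSk, l, hnd, htf, hpw⟩ := hcon' c.1 c.2 hBP hBc
    have hlen : l.length = k := by
      rw [← List.toFinset_card_of_nodup hnd, htf, hSk]
    set f : Fin k → Fin n := fun i => l.get (Fin.cast hlen.symm i) with hf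
    have hfinj : Function.Injective f := by
      intro i j hij
      have := (List.nodup_iff_injective_get.mp hnd) hij
      exact Fin.cast_injective _ this
    rw [Finset.mem_biUnion]
    refine ⟨f, by
      rw [hT, Finset.mem_filter]
      exact ⟨Finset.mem_univ _, hfinj⟩, ?_⟩
    simp only [Ωf, Finset.mem_filter]
    refine ⟨hc, ?_⟩
    intro i j hij
    have hget := List.pairwise_iff_get.mp hpw (Fin.cast hlen.symm i) (Fin.cast hlen.symm j)
      (by exact hij)
    exact hget
  -- cardinality chain
  have hTcard : T.card ≤ n ^ k := by
    calc T.card ≤ (Finset.univ : Finset (Fin k → Fin n)).card :=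
          Finset.card_le_card (Finset.filter_subset _ _)
      _ = n ^ k := by rw [Finset.card_univ, Fintype.card_fun, Fintype.card_fin, Fintype.card_fin]
  have hNb : 0 < N.choose b := Nat.choose_pos hb
  set p : ℝ := (b : ℝ) / (N : ℝ) with hp
  have hp0 : 0 ≤ p := by positivity
  set c₀ : ℝ := ((1 + p) / 2) ^ m * 2 ^ (n * n) * (N.choose b : ℝ) with hc₀
  have hchain : ((N.choose b : ℝ) * 2 ^ (n * n)) ≤ (n : ℝ) ^ k * c₀ := by
    have h1 : ((ΩAll n b).card : ℝ) ≤ ∑ f ∈ T, ((Ωf n k b f).card : ℝ) := by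
      have := Finset.card_le_card hcover
      have h2 := Finset.card_biUnion_le (s := T) (t := fun f => Ωf n k b f)
      exact_mod_cast (this.trans h2)
    have h3 : ∑ f ∈ T, ((Ωf n k b f).card : ℝ) ≤ ∑ f ∈ T, c₀ := by
      apply Finset.sum_le_sum
      intro f hfT
      have hfinj : Function.Injective f := by
        simpa [hT] using hfT
      exact Ωf_card_le n k b hkn hn hb f hfinj
    have h4 : ∑ f ∈ T, c₀ = (T.card : ℝ) * c₀ := by
      rw [Finset.sum_const, nsmul_eq_mul]
    have h5 : (T.card : ℝ) * c₀ ≤ (n : ℝ) ^ k * c₀ := by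
      apply mul_le_mul_of_nonneg_right _ (by positivity)
      exact_mod_cast hTcard
    have h0 : ((ΩAll n b).card : ℝ) = (N.choose b : ℝ) * 2 ^ (n * n) := by
      rw [ΩAll_card]; push_cast; ring
    linarith
  have hX : (0 : ℝ) < (N.choose b : ℝ) * 2 ^ (n * n) := by positivity
  have hfin : (n : ℝ) ^ k * c₀ < (N.choose b : ℝ) * 2 ^ (n * n) := by
    have : (n : ℝ) ^ k * c₀
        = ((n : ℝ) ^ k * ((1 + p) / 2) ^ m) * ((N.choose b : ℝ) * 2 ^ (n * n)) := by
      rw [hc₀]; ring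
    rw [this]
    have hlt : (n : ℝ) ^ k * ((1 + p) / 2) ^ m < 1 := by
      rw [hmkk]
      exact h
    calc ((n : ℝ) ^ k * ((1 + p) / 2) ^ m) * ((N.choose b : ℝ) * 2 ^ (n * n))
        < 1 * ((N.choose b : ℝ) * 2 ^ (n * n)) := by
          exact mul_lt_mul_of_pos_right hlt hX
      _ = _ := one_mul _
  linarith
end

section
/- Let G be a finite simple graph in which every vertex has at least one neighbor. Then there exists a set S of vertices of G such that the subgraph of G induced by S contains no cycles (is a forest) and |S| ≥ Σ_{v ∈ V(G)} 2/(deg(v)+1), where deg(v) is the degree of v in G and the sum is a real number. -/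
open Finset

section Aux
variable {V : Type*} [Fintype V] [DecidableEq V]

lemma walk_support_eq_map {W : Type*} {G : SimpleGraph W} {u v : W} (p : G.Walk u v) :
    p.support = (List.range (p.length + 1)).map p.getVert := by
  induction p with
  | nil => simp [List.range_succ]
  | cons h p ih =>
    rw [SimpleGraph.Walk.support_cons, SimpleGraph.Walk.length_cons,
      List.range_succ_eq_map, List.map_cons, List.map_map]
    congr 1

lemma forest_lemma {G : SimpleGraph V} (f : V → ℕ) (hf : Function.Injective f)
    (S : Finset V)
    (hS : ∀ v ∈ S, ∀ a ∈ S, ∀ b ∈ S, G.Adj v a → G.Adj v b →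
      f a ≤ f v → f b ≤ f v → a = b) :
    (G.induce (S : Set V)).IsAcyclic := by
  intro x c hc
  obtain ⟨m, hmmem, hmax⟩ := Finset.exists_max_image c.support.toFinset (fun y => f y.val)
      ⟨x, by simp⟩
  rw [List.mem_toFinset] at hmmem
  set c' := c.rotate m hmmem with hc'def
  have hc' : c'.IsCycle := hc.rotate hmmem
  have hL : 3 ≤ c'.length := hc'.three_le_length
  set y := c'.getVert 1 with hy
  set z := c'.getVert (c'.length - 1) with hz
  have hadj1 : (G.induce (S : Set V)).Adj m y := by
    have := c'.adj_getVert_succ (i := 0) (by omega)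
    simpa using this
  have hadj2 : (G.induce (S : Set V)).Adj z m := by
    have := c'.adj_getVert_succ (i := c'.length - 1) (by omega)
    have h2 : c'.length - 1 + 1 = c'.length := by omega
    rw [h2, SimpleGraph.Walk.getVert_length] at this
    exact this
  -- support tail description
  have htail : c'.support.tail = (List.range c'.length).map (fun i => c'.getVert (i + 1)) := by
    rw [walk_support_eq_map c', List.range_succ_eq_map, List.map_cons, List.tail_cons,
      List.map_map]
    rfl
  have hyz : y ≠ z := by
    intro hEq
    have hnd : c'.support.tail.Nodup := hc'.support_nodup
    rw [htail] at hnd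
    have h0 : (0 : ℕ) ∈ List.range c'.length := by simp; omega
    have h1 : c'.length - 2 ∈ List.range c'.length := by simp; omega
    have := List.inj_on_of_nodup_map hnd h0 h1 (by
      rw [show c'.length - 2 + 1 = c'.length - 1 by omega]
      exact hEq)
    omega
  have hmemy : y ∈ c.support := by
    have : y ∈ c'.support.tail := by
      rw [htail]
      exact List.mem_map_of_mem (a := 0) (by simp; omega)
    have h2 : y ∈ c.support.tail := ((SimpleGraph.Walk.support_rotate c m hmmem).perm.mem_iff).mp this
    rw [SimpleGraph.Walk.support_eq_cons c]
    exact List.mem_cons_of_mem _ h2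
  have hmemz : z ∈ c.support := by
    have : z ∈ c'.support.tail := by
      rw [htail]
      refine List.mem_map.mpr ⟨c'.length - 2, by simp; omega, ?_⟩
      rw [show c'.length - 2 + 1 = c'.length - 1 by omega]
    have h2 : z ∈ c.support.tail := ((SimpleGraph.Walk.support_rotate c m hmmem).perm.mem_iff).mp this
    rw [SimpleGraph.Walk.support_eq_cons c]
    exact List.mem_cons_of_mem _ h2
  have hA1 : G.Adj m.val y.val := by simpa using hadj1
  have hA2 : G.Adj m.val z.val := by simpa using hadj2.symm
  have hfy : f y.val ≤ f m.val := hmax y (List.mem_toFinset.mpr hmemy)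
  have hfz : f z.val ≤ f m.val := hmax z (List.mem_toFinset.mpr hmemz)
  have := hS m.val (by exact_mod_cast m.2) y.val (by exact_mod_cast y.2) z.val
    (by exact_mod_cast z.2) hA1 hA2 hfy hfz
  exact hyz (Subtype.ext this)

end Aux

open Finset

section Cnt
variable {V : Type*} [Fintype V] [DecidableEq V] {n : ℕ}

/-- rank of `v` within `A` under the order induced by `σ`. -/
def rnk (A : Finset V) (v : V) (σ : V ≃ Fin n) : ℕ :=
  (A.filter (fun u => σ u ≤ σ v)).card

noncomputable def stp (A : Finset V) (v : V) (σ : V ≃ Fin n) : V ≃ Fin n :=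
  if h : ((A.filter (fun u => σ v < σ u)).image σ).Nonempty then
    σ.trans (Equiv.swap (σ v) (((A.filter (fun u => σ v < σ u)).image σ).min' h))
  else σ

noncomputable def stpInv (A : Finset V) (v : V) (τ : V ≃ Fin n) : V ≃ Fin n :=
  if h : ((A.filter (fun u => τ u < τ v)).image τ).Nonempty then
    τ.trans (Equiv.swap (τ v) (((A.filter (fun u => τ u < τ v)).image τ).max' h))
  else τ

lemma one_le_rnk {A : Finset V} {v : V} (hvA : v ∈ A) (σ : V ≃ Fin n) :
    1 ≤ rnk A v σ :=
  Finset.card_pos.mpr ⟨v, mem_filter.mpr ⟨hvA, le_rfl⟩⟩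

lemma rnk_le_card (A : Finset V) (v : V) (σ : V ≃ Fin n) :
    rnk A v σ ≤ A.card :=
  Finset.card_le_card (filter_subset _ _)

lemma card_filter_lt (A : Finset V) (v : V) (σ : V ≃ Fin n) :
    (A.filter (fun u => σ v < σ u)).card = A.card - rnk A v σ := by
  have h := Finset.card_filter_add_card_filter_not
    (s := A) (p := fun u => σ u ≤ σ v)
  have h2 : (A.filter (fun u => ¬ σ u ≤ σ v)) = A.filter (fun u => σ v < σ u) := by
    apply filter_congr; intro u _; simp [not_le]
  rw [h2] at h
  rw [rnk]
  omega

lemma stp_spec {A : Finset V} {v : V} (hvA : v ∈ A) (σ : V ≃ Fin n)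
    (h : rnk A v σ < A.card) :
    rnk A v (stp A v σ) = rnk A v σ + 1 ∧ stpInv A v (stp A v σ) = σ := by
  have hBcard : (A.filter (fun u => σ v < σ u)).card = A.card - rnk A v σ :=
    card_filter_lt A v σ
  have hBne : (A.filter (fun u => σ v < σ u)).Nonempty := by
    rw [← card_pos]; omega
  have himg : ((A.filter (fun u => σ v < σ u)).image σ).Nonempty := hBne.image σ
  set m := ((A.filter (fun u => σ v < σ u)).image σ).min' himg with hmdef
  obtain ⟨w, hwB, hw⟩ := mem_image.mp (min'_mem _ himg)
  rw [← hmdef] at hw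
  have hwA : w ∈ A := (mem_filter.mp hwB).1
  have hvw : σ v < m := hw ▸ (mem_filter.mp hwB).2
  have hmin : ∀ u ∈ A, σ v < σ u → m ≤ σ u := fun u hu hlt =>
    min'_le _ _ (mem_image_of_mem σ (mem_filter.mpr ⟨hu, hlt⟩))
  have hstp : stp A v σ = σ.trans (Equiv.swap (σ v) m) := by
    rw [stp, dif_pos himg]
  have hτv : (stp A v σ) v = m := by
    rw [hstp]; simp [Equiv.swap_apply_left]
  have hτw : (stp A v σ) w = σ v := by
    rw [hstp]; simp [hw, Equiv.swap_apply_right]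
  have hτu : ∀ u : V, u ≠ v → u ≠ w → (stp A v σ) u = σ u := by
    intro u huv huw
    rw [hstp]
    simp only [Equiv.trans_apply]
    exact Equiv.swap_apply_of_ne_of_ne (fun hc => huv (σ.injective hc))
      (fun hc => huw (σ.injective (hw ▸ hc)))
  have hwv : w ≠ v := fun hc => absurd hvw (by rw [← hc, hw]; exact lt_irrefl _)
  -- key set identity
  have hset : A.filter (fun u => (stp A v σ) u ≤ (stp A v σ) v)
      = insert w (A.filter (fun u => σ u ≤ σ v)) := by
    ext u
    simp only [mem_filter, mem_insert, hτv]
    constructor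
    · rintro ⟨huA, hle⟩
      by_cases huw : u = w
      · exact Or.inl huw
      by_cases huv : u = v
      · exact Or.inr ⟨huA, by subst huv; exact le_rfl⟩
      right
      refine ⟨huA, ?_⟩
      rw [hτu u huv huw] at hle
      by_contra hgt
      have h1 : m ≤ σ u := hmin u huA (not_le.mp hgt)
      have h2 : σ u = m := le_antisymm hle h1
      exact huw (σ.injective (by rw [h2, hw]))
    · rintro (rfl | ⟨huA, hle⟩)
      · exact ⟨hwA, by rw [hτw]; exact le_of_lt hvw⟩
      · refine ⟨huA, ?_⟩
        by_cases huv : u = v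
        · subst huv; rw [hτv]
        · have huw : u ≠ w := by
            intro hc; subst hc
            exact absurd (hw ▸ hle) (not_le.mpr hvw)
          rw [hτu u huv huw]
          exact le_of_lt (lt_of_le_of_lt hle hvw)
  have hwnot : w ∉ A.filter (fun u => σ u ≤ σ v) := by
    intro hc
    exact absurd (hw ▸ (mem_filter.mp hc).2) (not_le.mpr hvw)
  have hrnkstep : rnk A v (stp A v σ) = rnk A v σ + 1 := by
    rw [rnk, hset, card_insert_of_notMem hwnot, rnk]
  refine ⟨hrnkstep, ?_⟩
  -- round trip
  have hCset : A.filter (fun u => (stp A v σ) u < (stp A v σ) v)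
      = insert w ((A.filter (fun u => σ u ≤ σ v)).erase v) := by
    ext u
    simp only [mem_filter, mem_insert, mem_erase, hτv]
    constructor
    · rintro ⟨huA, hlt⟩
      by_cases huw : u = w
      · exact Or.inl huw
      by_cases huv : u = v
      · subst huv; rw [hτv] at hlt; exact absurd hlt (lt_irrefl _)
      right
      rw [hτu u huv huw] at hlt
      refine ⟨huv, huA, ?_⟩
      by_contra hgt
      exact absurd hlt (not_lt.mpr (hmin u huA (not_le.mp hgt)))
    · rintro (rfl | ⟨huv, huA, hle⟩)
      · exact ⟨hwA, by rw [hτw]; exact hvw⟩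
      · refine ⟨huA, ?_⟩
        have huw : u ≠ w := by
          intro hc; subst hc
          exact absurd (hw ▸ hle) (not_le.mpr hvw)
        rw [hτu u huv huw]
        exact lt_of_le_of_lt hle hvw
  have hCne : ((A.filter (fun u => (stp A v σ) u < (stp A v σ) v)).image (stp A v σ)).Nonempty := by
    refine Nonempty.image ?_ _
    rw [hCset]
    exact insert_nonempty _ _
  have hM : ((A.filter (fun u => (stp A v σ) u < (stp A v σ) v)).image (stp A v σ)).max' hCne
      = σ v := by
    apply le_antisymm
    · apply max'_le
      intro b hb
      obtain ⟨u, huC, hub⟩ := mem_image.mp hb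
      rw [hCset] at huC
      rcases mem_insert.mp huC with rfl | hu
      · rw [← hub, hτw]
      · have h2 := mem_erase.mp hu
        have h3 := mem_filter.mp h2.2
        have huw : u ≠ w := by
          intro hc; subst hc
          exact absurd (hw ▸ h3.2) (not_le.mpr hvw)
        rw [← hub, hτu u h2.1 huw]
        exact h3.2
    · apply le_max'
      refine mem_image.mpr ⟨w, ?_, hτw⟩
      rw [hCset]; exact mem_insert_self _ _
  rw [stpInv, dif_pos hCne, hM, hτv]
  rw [hstp]
  rw [Equiv.trans_assoc]
  rw [Equiv.swap_comm m (σ v)] -- check direction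
  rw [Equiv.swap_swap, Equiv.trans_refl]

end Cnt

section Cnt2
variable {V : Type*} [Fintype V] [DecidableEq V] {n : ℕ}

lemma stpInv_spec {A : Finset V} {v : V} (hvA : v ∈ A) (τ : V ≃ Fin n)
    (h2 : 2 ≤ rnk A v τ) :
    rnk A v (stpInv A v τ) = rnk A v τ - 1 ∧ stp A v (stpInv A v τ) = τ := by
  have hCeq : A.filter (fun u => τ u < τ v) = (A.filter (fun u => τ u ≤ τ v)).erase v := by
    ext u
    simp only [mem_filter, mem_erase]
    constructor
    · rintro ⟨huA, hlt⟩
      exact ⟨fun hc => by subst hc; exact absurd hlt (lt_irrefl _), huA, le_of_lt hlt⟩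
    · rintro ⟨huv, huA, hle⟩
      refine ⟨huA, lt_of_le_of_ne hle (fun hc => huv (τ.injective hc))⟩
  have hCcard : (A.filter (fun u => τ u < τ v)).card = rnk A v τ - 1 := by
    have hvmem : v ∈ A.filter (fun u => τ u ≤ τ v) := mem_filter.mpr ⟨hvA, le_rfl⟩
    rw [hCeq, card_erase_of_mem hvmem]; rfl
  have hCne : (A.filter (fun u => τ u < τ v)).Nonempty := by
    rw [← card_pos]; omega
  have himg : ((A.filter (fun u => τ u < τ v)).image τ).Nonempty := hCne.image τ
  set M := ((A.filter (fun u => τ u < τ v)).image τ).max' himg with hMdef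
  obtain ⟨w, hwC, hw⟩ := mem_image.mp (max'_mem _ himg)
  rw [← hMdef] at hw
  have hwA : w ∈ A := (mem_filter.mp hwC).1
  have hwlt : M < τ v := hw ▸ (mem_filter.mp hwC).2
  have hmax : ∀ u ∈ A, τ u < τ v → τ u ≤ M := fun u hu hlt =>
    le_max' _ _ (mem_image_of_mem τ (mem_filter.mpr ⟨hu, hlt⟩))
  have hstpInv : stpInv A v τ = τ.trans (Equiv.swap (τ v) M) := by
    rw [stpInv, dif_pos himg]
  have hσv : (stpInv A v τ) v = M := by
    rw [hstpInv]; simp [Equiv.swap_apply_left]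
  have hσw : (stpInv A v τ) w = τ v := by
    rw [hstpInv]; simp [hw, Equiv.swap_apply_right]
  have hσu : ∀ u : V, u ≠ v → u ≠ w → (stpInv A v τ) u = τ u := by
    intro u huv huw
    rw [hstpInv]
    simp only [Equiv.trans_apply]
    exact Equiv.swap_apply_of_ne_of_ne (fun hc => huv (τ.injective hc))
      (fun hc => huw (τ.injective (hw ▸ hc)))
  have hwv : w ≠ v := fun hc => absurd hwlt (by rw [← hc, hw]; exact lt_irrefl _)
  have hset : A.filter (fun u => (stpInv A v τ) u ≤ (stpInv A v τ) v)
      = (A.filter (fun u => τ u ≤ τ v)).erase w := by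
    ext u
    simp only [mem_filter, mem_erase, hσv]
    constructor
    · rintro ⟨huA, hle⟩
      by_cases huv : u = v
      · subst huv
        exact ⟨hwv.symm, huA, le_rfl⟩
      by_cases huw : u = w
      · subst huw
        rw [hσw] at hle
        exact absurd hle (not_le.mpr hwlt)
      rw [hσu u huv huw] at hle
      exact ⟨huw, huA, le_of_lt (lt_of_le_of_lt hle hwlt)⟩
    · rintro ⟨huw, huA, hle⟩
      refine ⟨huA, ?_⟩
      by_cases huv : u = v
      · subst huv; rw [hσv]
      · rw [hσu u huv huw]
        have : τ u < τ v := lt_of_le_of_ne hle (fun hc => huv (τ.injective hc))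
        exact hmax u huA this
  have hwmem : w ∈ A.filter (fun u => τ u ≤ τ v) :=
    mem_filter.mpr ⟨hwA, le_of_lt (hw ▸ hwlt)⟩
  have hrnk : rnk A v (stpInv A v τ) = rnk A v τ - 1 := by
    rw [rnk, hset, card_erase_of_mem hwmem]; rfl
  refine ⟨hrnk, ?_⟩
  -- round trip
  have hBset : A.filter (fun u => (stpInv A v τ) v < (stpInv A v τ) u)
      = insert w (A.filter (fun u => τ v < τ u)) := by
    ext u
    simp only [mem_filter, mem_insert, hσv]
    constructor
    · rintro ⟨huA, hlt⟩
      by_cases huw : u = w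
      · exact Or.inl huw
      by_cases huv : u = v
      · subst huv; rw [hσv] at hlt; exact absurd hlt (lt_irrefl _)
      right
      rw [hσu u huv huw] at hlt
      refine ⟨huA, ?_⟩
      by_contra hgt
      have h3 : τ u < τ v := lt_of_le_of_ne (not_lt.mp hgt) (fun hc => huv (τ.injective hc))
      exact absurd hlt (not_lt.mpr (hmax u huA h3))
    · rintro (rfl | ⟨huA, hlt⟩)
      · exact ⟨hwA, by rw [hσw]; exact hwlt⟩
      · refine ⟨huA, ?_⟩
        have huv : u ≠ v := fun hc => by subst hc; exact absurd hlt (lt_irrefl _)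
        have huw : u ≠ w := by
          intro hc; subst hc
          exact absurd (hw ▸ hlt) (not_lt.mpr (le_of_lt hwlt))
        rw [hσu u huv huw]
        exact lt_trans hwlt hlt
  have hBne : ((A.filter (fun u => (stpInv A v τ) v < (stpInv A v τ) u)).image
      (stpInv A v τ)).Nonempty := by
    refine Nonempty.image ?_ _
    rw [hBset]
    exact insert_nonempty _ _
  have hm : ((A.filter (fun u => (stpInv A v τ) v < (stpInv A v τ) u)).image
      (stpInv A v τ)).min' hBne = τ v := by
    apply le_antisymm
    · apply min'_le
      refine mem_image.mpr ⟨w, ?_, hσw⟩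
      rw [hBset]; exact mem_insert_self _ _
    · apply le_min'
      intro b hb
      obtain ⟨u, huB, hub⟩ := mem_image.mp hb
      rw [hBset] at huB
      rcases mem_insert.mp huB with rfl | hu
      · rw [← hub, hσw]
      · have h3 := mem_filter.mp hu
        have huv : u ≠ v := fun hc => by
          subst hc; exact absurd h3.2 (lt_irrefl _)
        have huw : u ≠ w := by
          intro hc; subst hc
          exact absurd (hw ▸ h3.2) (not_lt.mpr (le_of_lt hwlt))
        rw [← hub, hσu u huv huw]
        exact le_of_lt h3.2
  rw [stp, dif_pos hBne, hm, hσv, hstpInv]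
  rw [Equiv.trans_assoc, Equiv.swap_comm M (τ v), Equiv.swap_swap, Equiv.trans_refl]

end Cnt2

section Cnt3
variable {V : Type*} [Fintype V] [DecidableEq V] {n : ℕ}

lemma level_eq {A : Finset V} {v : V} (hvA : v ∈ A) {i : ℕ} (h1 : 1 ≤ i)
    (hik : i < A.card) :
    (univ.filter (fun σ : V ≃ Fin n => rnk A v σ = i)).card
      = (univ.filter (fun σ : V ≃ Fin n => rnk A v σ = i + 1)).card := by
  apply Finset.card_bij' (fun σ _ => stp A v σ) (fun τ _ => stpInv A v τ)
  · intro σ hσ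
    have hσ' : rnk A v σ = i := (mem_filter.mp hσ).2
    have := (stp_spec hvA σ (by omega)).1
    simp only [mem_filter, mem_univ, true_and]
    omega
  · intro τ hτ
    have hτ' : rnk A v τ = i + 1 := (mem_filter.mp hτ).2
    have := (stpInv_spec hvA τ (by omega)).1
    simp only [mem_filter, mem_univ, true_and]
    omega
  · intro σ hσ
    have hσ' : rnk A v σ = i := (mem_filter.mp hσ).2
    exact (stp_spec hvA σ (by omega)).2
  · intro τ hτ
    have hτ' : rnk A v τ = i + 1 := (mem_filter.mp hτ).2
    exact (stpInv_spec hvA τ (by omega)).2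

lemma level_const {A : Finset V} {v : V} (hvA : v ∈ A) :
    ∀ i : ℕ, 1 ≤ i → i ≤ A.card →
      (univ.filter (fun σ : V ≃ Fin n => rnk A v σ = i)).card
        = (univ.filter (fun σ : V ≃ Fin n => rnk A v σ = 1)).card := by
  intro i
  induction i with
  | zero => omega
  | succ j ih =>
    intro h1 h2
    rcases Nat.eq_or_lt_of_le h1 with h | h
    · rw [← h]
    · have hj1 : 1 ≤ j := by omega
      have hjk : j < A.card := by omega
      rw [← level_eq hvA hj1 hjk]
      exact ih hj1 (by omega)

lemma good_count {A : Finset V} {v : V} (hvA : v ∈ A) (hk : 2 ≤ A.card) :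
    A.card * (univ.filter (fun σ : V ≃ Fin n => rnk A v σ ≤ 2)).card
      = 2 * Fintype.card (V ≃ Fin n) := by
  have htotal : Fintype.card (V ≃ Fin n)
      = ∑ i ∈ Icc 1 A.card, (univ.filter (fun σ : V ≃ Fin n => rnk A v σ = i)).card := by
    rw [← card_univ]
    apply Finset.card_eq_sum_card_fiberwise
    intro σ _
    exact mem_Icc.mpr ⟨one_le_rnk hvA σ, rnk_le_card A v σ⟩
  have hconst : ∑ i ∈ Icc 1 A.card, (univ.filter (fun σ : V ≃ Fin n => rnk A v σ = i)).card
      = A.card * (univ.filter (fun σ : V ≃ Fin n => rnk A v σ = 1)).card := by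
    rw [Finset.sum_congr rfl (fun i hi => level_const hvA i (mem_Icc.mp hi).1 (mem_Icc.mp hi).2)]
    rw [Finset.sum_const, Nat.card_Icc]
    simp [smul_eq_mul]
  have hsplit : (univ.filter (fun σ : V ≃ Fin n => rnk A v σ ≤ 2)).card
      = (univ.filter (fun σ : V ≃ Fin n => rnk A v σ = 1)).card
        + (univ.filter (fun σ : V ≃ Fin n => rnk A v σ = 2)).card := by
    rw [← Finset.card_union_of_disjoint (by
      simp only [Finset.disjoint_filter]
      intro σ _ h1 h2
      omega)]
    congr 1
    rw [← Finset.filter_or]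
    apply filter_congr
    intro σ _
    have := one_le_rnk hvA σ
    constructor
    · intro h; omega
    · intro h; omega
  have h2 : (univ.filter (fun σ : V ≃ Fin n => rnk A v σ = 2)).card
      = (univ.filter (fun σ : V ≃ Fin n => rnk A v σ = 1)).card :=
    level_const hvA 2 (by omega) hk
  rw [hsplit, h2, htotal, hconst]
  ring

end Cnt3

theorem stmt7 {V : Type*} [Fintype V] (G : SimpleGraph V) [DecidableRel G.Adj]
    (hdeg : ∀ v, 0 < G.degree v) :
    ∃ S : Finset V, (G.induce (S : Set V)).IsAcyclic ∧
      (∑ v : V, (2 : ℝ) / (G.degree v + 1)) ≤ (S.card : ℝ) := by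
  classical
  set n := Fintype.card V with hn
  set N := Fintype.card (V ≃ Fin n) with hN
  have hAcard : ∀ x : V, (insert x (G.neighborFinset x)).card = G.degree x + 1 := by
    intro x
    rw [Finset.card_insert_of_notMem (G.notMem_neighborFinset_self x),
      G.card_neighborFinset_eq_degree]
  have hgood : ∀ x : V,
      ((univ.filter (fun σ : V ≃ Fin n =>
          rnk (insert x (G.neighborFinset x)) x σ ≤ 2)).card : ℝ)
        = N * (2 / (G.degree x + 1)) := by
    intro x
    have h := good_count (A := insert x (G.neighborFinset x)) (v := x) (n := n)
      (mem_insert_self _ _) (by rw [hAcard x]; have := hdeg x; omega)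
    rw [hAcard x] at h
    have hcast := congrArg (fun k : ℕ => (k : ℝ)) h
    push_cast at hcast
    have hpos : (0:ℝ) < (G.degree x : ℝ) + 1 := by positivity
    rw [hN]
    field_simp
    linear_combination hcast
  -- sum over permutations
  have hsum : ∑ σ : V ≃ Fin n, (((univ.filter (fun x : V =>
        rnk (insert x (G.neighborFinset x)) x σ ≤ 2)).card : ℝ))
      = ∑ x : V, (((univ.filter (fun σ : V ≃ Fin n =>
        rnk (insert x (G.neighborFinset x)) x σ ≤ 2)).card : ℝ)) := by
    simp only [Finset.card_filter]
    push_cast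
    rw [Finset.sum_comm]
  have htot : ∑ σ : V ≃ Fin n, (((univ.filter (fun x : V =>
        rnk (insert x (G.neighborFinset x)) x σ ≤ 2)).card : ℝ))
      = N * ∑ x : V, (2:ℝ) / (G.degree x + 1) := by
    rw [hsum, Finset.mul_sum]
    exact Finset.sum_congr rfl fun x _ => hgood x
  -- choose a good permutation
  have hexists : ∃ σ : V ≃ Fin n,
      (∑ x : V, (2:ℝ) / (G.degree x + 1)) ≤
        (((univ.filter (fun x : V =>
          rnk (insert x (G.neighborFinset x)) x σ ≤ 2)).card : ℝ)) := by
    by_contra hcon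
    push_neg at hcon
    have hne : (univ : Finset (V ≃ Fin n)).Nonempty := ⟨Fintype.equivFin V, mem_univ _⟩
    have hlt := Finset.sum_lt_sum_of_nonempty hne (fun σ _ => hcon σ)
    rw [htot] at hlt
    rw [Finset.sum_const, nsmul_eq_mul, Finset.card_univ, ← hN] at hlt
    exact absurd hlt (lt_irrefl _)
  obtain ⟨σ₀, hσ₀⟩ := hexists
  refine ⟨univ.filter (fun x : V =>
      rnk (insert x (G.neighborFinset x)) x σ₀ ≤ 2), ?_, hσ₀⟩
  apply forest_lemma (f := fun x => ((σ₀ x : ℕ)))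
    (fun a b hab => σ₀.injective (Fin.val_injective hab))
  intro v hv a ha b hb hadj1 hadj2 hle1 hle2
  have hv2 : rnk (insert v (G.neighborFinset v)) v σ₀ ≤ 2 := (mem_filter.mp hv).2
  by_contra hab
  have hamem : a ∈ (insert v (G.neighborFinset v)).filter (fun u => σ₀ u ≤ σ₀ v) := by
    refine mem_filter.mpr ⟨mem_insert_of_mem ((G.mem_neighborFinset _ _).mpr hadj1), ?_⟩
    rw [Fin.le_def]; exact hle1
  have hbmem : b ∈ (insert v (G.neighborFinset v)).filter (fun u => σ₀ u ≤ σ₀ v) := by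
    refine mem_filter.mpr ⟨mem_insert_of_mem ((G.mem_neighborFinset _ _).mpr hadj2), ?_⟩
    rw [Fin.le_def]; exact hle2
  have hvmem : v ∈ (insert v (G.neighborFinset v)).filter (fun u => σ₀ u ≤ σ₀ v) :=
    mem_filter.mpr ⟨mem_insert_self _ _, le_rfl⟩
  have hsub : ({v, a, b} : Finset V) ⊆
      (insert v (G.neighborFinset v)).filter (fun u => σ₀ u ≤ σ₀ v) := by
    intro u hu
    rcases mem_insert.mp hu with rfl | hu
    · exact hvmem
    rcases mem_insert.mp hu with rfl | hu
    · exact hamem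
    · rw [mem_singleton.mp hu]; exact hbmem
  have hcard3 : ({v, a, b} : Finset V).card = 3 := by
    rw [card_insert_of_notMem (by simp [hadj1.ne, hadj2.ne]), card_pair hab]
  have := Finset.card_le_card hsub
  rw [hcard3] at this
  rw [rnk] at hv2
  omega
end

section
/- Let n and m be positive integers with n ≤ m ≤ C(n,2). Every general two-coloring of the complete graph K_n with exactly m unicolored edges contains a monochromatic clique on at least n²/(m+n) vertices (equivalently, at least n/(m/n + 1) vertices, as real numbers). -/
/-- A general two-coloring of `K_n`: symmetric red/blue predicates such that
every pair of distinct vertices receives at least one color. -/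
structure GenTwoColoring (n : ℕ) where
  red : Fin n → Fin n → Bool
  blue : Fin n → Fin n → Bool
  red_symm : ∀ i j, red i j = red j i
  blue_symm : ∀ i j, blue i j = blue j i
  total : ∀ i j, i ≠ j → red i j = true ∨ blue i j = true

/-- The number of bicolored edges (unordered pairs receiving both colors). -/
def GenTwoColoring.bicoloredCount {n : ℕ} (c : GenTwoColoring n) : ℕ :=
  (Finset.univ.filter fun p : Fin n × Fin n =>
    p.1 < p.2 ∧ c.red p.1 p.2 = true ∧ c.blue p.1 p.2 = true).card

/-- The number of unicolored edges (unordered pairs receiving exactly one color). -/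
def GenTwoColoring.unicoloredCount {n : ℕ} (c : GenTwoColoring n) : ℕ :=
  (Finset.univ.filter fun p : Fin n × Fin n =>
    p.1 < p.2 ∧ ¬(c.red p.1 p.2 = true ∧ c.blue p.1 p.2 = true)).card

/-- `S` is a monochromatic clique: one single color belongs to the color set of
every pair of distinct vertices of `S`. -/
def GenTwoColoring.IsMonoClique {n : ℕ} (c : GenTwoColoring n) (S : Finset (Fin n)) : Prop :=
  (∀ i ∈ S, ∀ j ∈ S, i ≠ j → c.red i j = true) ∨
  (∀ i ∈ S, ∀ j ∈ S, i ≠ j → c.blue i j = true)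


lemma arith_core (n k s w a : ℤ) (h0s : 0 ≤ s) (h0w : 0 ≤ w) (hkn : k ≤ n) (hk : 1 ≤ k)
    (h1 : (n - k)^2 ≤ s * w) (h3 : w + k^2 ≤ a) : n^2 ≤ (s+1) * a := by
  have ht : (0:ℤ) ≤ a - k^2 := by linarith
  have h1t : (n - k)^2 ≤ s * (a - k^2) := le_trans h1 (by nlinarith)
  rcases ht.lt_or_eq with htp | hte
  · have ha : (0:ℤ) < a := by nlinarith
    nlinarith [sq_nonneg (a - n*k), mul_le_mul_of_nonneg_left h1t ha.le, htp]
  · have hw : w = 0 := by nlinarith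
    have hnk : n = k := by nlinarith [sq_nonneg (n - k)]
    nlinarith

def pairsOf {n : ℕ} (adj : Fin n → Fin n → Bool) (V : Finset (Fin n)) :
    Finset (Fin n × Fin n) :=
  (V ×ˢ V).filter fun p => p.1 ≠ p.2 ∧ adj p.1 p.2 = true

def degOf {n : ℕ} (adj : Fin n → Fin n → Bool) (V : Finset (Fin n)) (v : Fin n) : ℕ :=
  (V.filter fun u => u ≠ v ∧ adj v u = true).card

lemma indep_exists {n : ℕ} (adj : Fin n → Fin n → Bool)
    (hs : ∀ i j, adj i j = adj j i) (V : Finset (Fin n)) :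
    ∃ S : Finset (Fin n), S ⊆ V ∧ (∀ i ∈ S, ∀ j ∈ S, i ≠ j → adj i j = false) ∧
      V.card ^ 2 ≤ S.card * (V.card + (pairsOf adj V).card) := by
  induction V using Finset.strongInduction with
  | _ V ih =>
  rcases V.eq_empty_or_nonempty with rfl | hne
  · exact ⟨∅, by simp⟩
  · -- vertex of minimum degree
    obtain ⟨v, hvV, hvmin⟩ := Finset.exists_min_image V (degOf adj V) hne
    set d := degOf adj V v with hd
    set Nb : Finset (Fin n) := insert v (V.filter fun u => u ≠ v ∧ adj v u = true) with hNb
    have hNbV : Nb ⊆ V := by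
      intro u hu
      rcases Finset.mem_insert.mp hu with rfl | hu
      · exact hvV
      · exact (Finset.mem_filter.mp hu).1
    have hNbcard : Nb.card = d + 1 := by
      rw [hNb, Finset.card_insert_of_notMem (by simp), hd, degOf]
    set V' : Finset (Fin n) := V \ Nb with hV'
    have hV'V : V' ⊂ V := by
      refine Finset.ssubset_iff_of_subset (Finset.sdiff_subset) |>.mpr
        ⟨v, hvV, by simp [hV', hNb]⟩
    obtain ⟨S', hS'V', hS'ind, hS'card⟩ := ih V' hV'V
    -- the new independent set
    have hvNb : v ∈ Nb := Finset.mem_insert_self _ _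
    have hvV' : v ∉ V' := by simp [hV', hvNb]
    have hvS' : v ∉ S' := fun h => hvV' (hS'V' h)
    refine ⟨insert v S', ?_, ?_, ?_⟩
    · intro u hu
      rcases Finset.mem_insert.mp hu with rfl | hu
      · exact hvV
      · exact (Finset.sdiff_subset) (hS'V' hu)
    · intro i hi j hj hij
      have key : ∀ u ∈ S', adj v u = false := by
        intro u hu
        have huV' : u ∈ V' := hS'V' hu
        have huNb : u ∉ Nb := (Finset.mem_sdiff.mp huV').2
        by_contra h
        have : adj v u = true := by simpa using h
        have huv : u ≠ v := by rintro rfl; exact hvV' huV'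
        exact huNb (Finset.mem_insert.mpr (Or.inr (Finset.mem_filter.mpr
          ⟨(Finset.mem_sdiff.mp huV').1, huv, this⟩)))
      rcases Finset.mem_insert.mp hi with rfl | hi'
      · rcases Finset.mem_insert.mp hj with rfl | hj'
        · exact absurd rfl hij
        · exact key j hj'
      · rcases Finset.mem_insert.mp hj with rfl | hj'
        · rw [hs]; exact key i hi'
        · exact hS'ind i hi' j hj' hij
    · -- the counting
      -- pairs with first coordinate in Nb
      set bad : Finset (Fin n × Fin n) :=
        Nb.biUnion (fun u => (V.filter fun w => w ≠ u ∧ adj u w = true).image fun w => (u, w))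
        with hbad
      have hbadcard : bad.card = ∑ u ∈ Nb, degOf adj V u := by
        rw [hbad, Finset.card_biUnion]
        · refine Finset.sum_congr rfl fun u _ => ?_
          rw [Finset.card_image_of_injective _ (fun a b h => by simpa using congrArg Prod.snd h)]
          rfl
        · intro a ha b hb hab
          simp only [Finset.disjoint_left, Finset.mem_image, Finset.mem_filter]
          rintro p ⟨w, _, rfl⟩ ⟨w', _, h'⟩
          exact hab (congrArg Prod.fst h').symm
      have hbadsub : bad ⊆ pairsOf adj V := by
        intro p hp
        rw [hbad] at hp
        obtain ⟨u, hu, hp⟩ := Finset.mem_biUnion.mp hp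
        obtain ⟨w, hw, rfl⟩ := Finset.mem_image.mp hp
        obtain ⟨hwV, hwu, hadj⟩ := Finset.mem_filter.mp hw
        exact Finset.mem_filter.mpr ⟨Finset.mem_product.mpr ⟨hNbV hu, hwV⟩, Ne.symm hwu, hadj⟩
      have hdisj : Disjoint (pairsOf adj V') bad := by
        rw [Finset.disjoint_left]
        intro p hp hp'
        have h1 : p.1 ∈ V' := (Finset.mem_product.mp (Finset.mem_filter.mp hp).1).1
        rw [hbad] at hp'
        obtain ⟨u, hu, hp'⟩ := Finset.mem_biUnion.mp hp'
        obtain ⟨w, _, rfl⟩ := Finset.mem_image.mp hp'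
        exact (Finset.mem_sdiff.mp h1).2 hu
      have hsubV : pairsOf adj V' ⊆ pairsOf adj V := by
        intro p hp
        have := Finset.mem_filter.mp hp
        exact Finset.mem_filter.mpr ⟨Finset.mem_product.mpr
          ⟨Finset.sdiff_subset (Finset.mem_product.mp this.1).1,
           Finset.sdiff_subset (Finset.mem_product.mp this.1).2⟩, this.2⟩
      have hcount : (pairsOf adj V').card + bad.card ≤ (pairsOf adj V).card := by
        rw [← Finset.card_union_of_disjoint hdisj]
        exact Finset.card_le_card (Finset.union_subset hsubV hbadsub)
      have hdegbound : (d + 1) * d ≤ bad.card := by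
        rw [hbadcard]
        calc (d+1) * d = ∑ _u ∈ Nb, d := by rw [Finset.sum_const, hNbcard, smul_eq_mul]
        _ ≤ ∑ u ∈ Nb, degOf adj V u :=
          Finset.sum_le_sum fun u hu => hvmin u (hNbV hu)
      have hVcard : V'.card = V.card - (d + 1) := by
        rw [hV', Finset.card_sdiff_of_subset hNbV, hNbcard]
      have hkle : d + 1 ≤ V.card := hNbcard ▸ Finset.card_le_card hNbV
      -- put it all together over ℤ
      have hScard : (insert v S').card = S'.card + 1 := by
        rw [Finset.card_insert_of_notMem hvS']
      rw [hScard]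
      have hc1 : ((V'.card : ℤ)) = (V.card : ℤ) - (d+1) := by
        rw [hVcard, Nat.cast_sub hkle]; push_cast; ring
      have hc2 : (pairsOf adj V').card + (d+1)*d ≤ (pairsOf adj V).card :=
        le_trans (Nat.add_le_add_left hdegbound _) (by linarith [hcount])
      have hc2' : ((pairsOf adj V').card : ℤ) + (d+1)*d ≤ ((pairsOf adj V).card : ℤ) := by
        exact_mod_cast hc2
      have hz := arith_core (V.card) (d+1) (S'.card)
        ((V'.card : ℤ) + (pairsOf adj V').card)
        ((V.card : ℤ) + (pairsOf adj V).card) (by positivity) (by positivity)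
        (by exact_mod_cast hkle) (by linarith)
        (by rw [← hc1]; exact_mod_cast hS'card)
        (by rw [hc1]; nlinarith [hc2'])
      exact_mod_cast hz

lemma pairs_double {n : ℕ} (adj : Fin n → Fin n → Bool) (hs : ∀ i j, adj i j = adj j i) :
    ((Finset.univ ×ˢ Finset.univ).filter fun p : Fin n × Fin n =>
        p.1 ≠ p.2 ∧ adj p.1 p.2 = true).card
      = 2 * ((Finset.univ.filter fun p : Fin n × Fin n =>
        p.1 < p.2 ∧ adj p.1 p.2 = true).card) := by
  have huniv : (Finset.univ ×ˢ Finset.univ : Finset (Fin n × Fin n)) = Finset.univ := by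
    simp
  rw [huniv]
  set A := Finset.univ.filter fun p : Fin n × Fin n => p.1 < p.2 ∧ adj p.1 p.2 = true with hA
  set B := Finset.univ.filter fun p : Fin n × Fin n => p.2 < p.1 ∧ adj p.1 p.2 = true with hB
  have hsplit : (Finset.univ.filter fun p : Fin n × Fin n =>
      p.1 ≠ p.2 ∧ adj p.1 p.2 = true) = A ∪ B := by
    ext p
    simp only [hA, hB, Finset.mem_union, Finset.mem_filter, Finset.mem_univ, true_and]
    constructor
    · rintro ⟨hne, hadj⟩
      rcases lt_or_gt_of_ne hne with h | h
      · exact Or.inl ⟨h, hadj⟩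
      · exact Or.inr ⟨h, hadj⟩
    · rintro (⟨h, hadj⟩ | ⟨h, hadj⟩)
      · exact ⟨ne_of_lt h, hadj⟩
      · exact ⟨(ne_of_lt h).symm, hadj⟩
  have hdisj : Disjoint A B := by
    rw [Finset.disjoint_left]
    intro p hp hp'
    simp only [hA, hB, Finset.mem_filter] at hp hp'
    exact absurd hp'.2.1 (not_lt.mpr (le_of_lt hp.2.1))
  have hcardB : B.card = A.card := by
    apply Finset.card_nbij' (fun p => (p.2, p.1)) (fun p => (p.2, p.1))
    · intro p hp
      simp only [hA, hB, Finset.mem_coe, Finset.mem_filter, Finset.mem_univ, true_and] at hp ⊢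
      exact ⟨hp.1, by rw [hs]; exact hp.2⟩
    · intro p hp
      simp only [hA, hB, Finset.mem_coe, Finset.mem_filter, Finset.mem_univ, true_and] at hp ⊢
      exact ⟨hp.1, by rw [hs]; exact hp.2⟩
    · intro p _; rfl
    · intro p _; rfl
  rw [hsplit, Finset.card_union_of_disjoint hdisj, hcardB]
  ring

lemma half_case {n : ℕ} (m : ℕ) (hn : 0 < n) (adj : Fin n → Fin n → Bool)
    (hs : ∀ i j, adj i j = adj j i)
    (he : 2 * ((Finset.univ.filter fun p : Fin n × Fin n =>
        p.1 < p.2 ∧ adj p.1 p.2 = true).card) ≤ m) :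
    ∃ S : Finset (Fin n), (∀ i ∈ S, ∀ j ∈ S, i ≠ j → adj i j = false) ∧
      (n : ℝ) ^ 2 / ((m : ℝ) + (n : ℝ)) ≤ (S.card : ℝ) := by
  obtain ⟨S, _, hind, hcard⟩ := indep_exists adj hs Finset.univ
  refine ⟨S, hind, ?_⟩
  rw [Finset.card_univ, Fintype.card_fin] at hcard
  have hpc : (pairsOf adj Finset.univ).card ≤ m := by
    rw [pairsOf, pairs_double adj hs]; exact he
  have hnat : n ^ 2 ≤ S.card * (n + m) :=
    le_trans hcard (Nat.mul_le_mul_left _ (Nat.add_le_add_left hpc _))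
  have hr : (n : ℝ) ^ 2 ≤ (S.card : ℝ) * ((n : ℝ) + m) := by exact_mod_cast hnat
  rw [div_le_iff₀ (by positivity)]
  nlinarith [hr]

theorem stmt12 (n m : ℕ) (hn : 0 < n) (hm : 0 < m) (hnm : n ≤ m)
    (hm2 : m ≤ n.choose 2) (c : GenTwoColoring n) (hc : c.unicoloredCount = m) :
    ∃ S : Finset (Fin n), c.IsMonoClique S ∧
      (n : ℝ) ^ 2 / ((m : ℝ) + (n : ℝ)) ≤ (S.card : ℝ) := by
  set adjR : Fin n → Fin n → Bool := fun i j => !(c.red i j) with hadjR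
  set adjB : Fin n → Fin n → Bool := fun i j => !(c.blue i j) with hadjB
  have hsR : ∀ i j, adjR i j = adjR j i := fun i j => by simp [hadjR, c.red_symm i j]
  have hsB : ∀ i j, adjB i j = adjB j i := fun i j => by simp [hadjB, c.blue_symm i j]
  set AR := Finset.univ.filter fun p : Fin n × Fin n => p.1 < p.2 ∧ adjR p.1 p.2 = true
    with hAR
  set AB := Finset.univ.filter fun p : Fin n × Fin n => p.1 < p.2 ∧ adjB p.1 p.2 = true
    with hAB
  have hsum : AR.card + AB.card = m := by
    rw [← hc, GenTwoColoring.unicoloredCount, ← Finset.card_union_of_disjoint]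
    · congr 1
      ext p
      simp only [hAR, hAB, hadjR, hadjB, Finset.mem_union, Finset.mem_filter,
        Finset.mem_univ, true_and, Bool.not_eq_true', not_and]
      constructor
      · rintro (⟨h1, h2⟩ | ⟨h1, h2⟩)
        · exact ⟨h1, fun hr => by rw [hr] at h2; exact absurd h2 (by simp)⟩
        · exact ⟨h1, fun hr hb => by rw [hb] at h2; exact absurd h2 (by simp)⟩
      · rintro ⟨h1, h2⟩
        by_cases hr : c.red p.1 p.2 = true
        · exact Or.inr ⟨h1, by simpa using h2 hr⟩
        · exact Or.inl ⟨h1, by simpa using hr⟩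
    · rw [Finset.disjoint_left]
      intro p hp hp'
      simp only [hAR, hAB, hadjR, hadjB, Finset.mem_filter, Finset.mem_univ, true_and,
        Bool.not_eq_true'] at hp hp'
      rcases c.total p.1 p.2 (ne_of_lt hp.1) with h | h
      · rw [hp.2] at h; exact absurd h (by simp)
      · rw [hp'.2] at h; exact absurd h (by simp)
  rcases le_total AR.card AB.card with hle | hle
  · obtain ⟨S, hind, hbound⟩ := half_case m hn adjR hsR (by rw [← hAR]; omega)
    refine ⟨S, Or.inl fun i hi j hj hij => ?_, hbound⟩
    have := hind i hi j hj hij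
    simpa [hadjR] using this
  · obtain ⟨S, hind, hbound⟩ := half_case m hn adjB hsB (by rw [← hAB]; omega)
    refine ⟨S, Or.inr fun i hi j hj hij => ?_, hbound⟩
    have := hind i hi j hj hij
    simpa [hadjB] using this
end

section
/- Let n and m be positive integers with n ≤ m ≤ C(n,2). Every semicomplete digraph on n vertices with exactly m one-way pairs contains a transitive subtournament on at least 2n²/(2m+n) vertices (equivalently, at least 2n/(2m/n + 1) vertices, as real numbers). -/
namespace SCD
open Finset

variable {n : ℕ} (G : SemicompleteDigraph n)

/-- one-way arc from u to v -/
def OW (u v : Fin n) : Prop := G.arc u v = true ∧ G.arc v u = false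

instance (u v : Fin n) : Decidable (OW G u v) := by
  unfold OW; infer_instance

def Nplus (v : Fin n) : Finset (Fin n) := univ.filter (fun u => OW G v u)
def Nminus (v : Fin n) : Finset (Fin n) := univ.filter (fun u => OW G u v)

lemma arc_of_not_OW {u v : Fin n} (huv : u ≠ v) (h : ¬ OW G v u) : G.arc u v = true := by
  rcases G.total u v huv with h1 | h1
  · exact h1
  · by_contra h2
    exact h ⟨h1, by simpa using h2⟩

def step (L : List (Fin n)) (v : Fin n) : List (Fin n) :=
  if L.all (fun u => G.arc u v) then L ++ [v]
  else if L.all (fun u => G.arc v u) then v :: L else L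

lemma mem_step {x : Fin n} {L : List (Fin n)} {v : Fin n} (h : x ∈ L) : x ∈ step G L v := by
  unfold step
  split_ifs <;> simp [h]

lemma mem_step' {x : Fin n} {L : List (Fin n)} {v : Fin n} (h : x ∈ step G L v) :
    x ∈ L ∨ x = v := by
  unfold step at h
  split_ifs at h
  · simp at h; tauto
  · simp at h; tauto
  · exact Or.inl h

lemma mem_foldl {x : Fin n} {L : List (Fin n)} (l : List (Fin n)) (h : x ∈ L) :
    x ∈ l.foldl (step G) L := by
  induction l generalizing L with
  | nil => exact h
  | cons a t ih => exact ih (mem_step G h)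

lemma mem_foldl' {x : Fin n} {L : List (Fin n)} {l : List (Fin n)}
    (h : x ∈ l.foldl (step G) L) : x ∈ L ∨ x ∈ l := by
  induction l generalizing L with
  | nil => exact Or.inl h
  | cons a t ih =>
    rcases ih h with h1 | h1
    · rcases mem_step' G h1 with h2 | h2
      · exact Or.inl h2
      · simp [h2]
    · simp [h1]

def Good (L : List (Fin n)) : Prop :=
  L.Nodup ∧ L.Pairwise fun u v => G.arc u v = true

lemma good_step {L : List (Fin n)} {v : Fin n} (hL : Good G L) (hv : v ∉ L) :
    Good G (step G L v) := by
  obtain ⟨h1, h2⟩ := hL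
  unfold step
  split_ifs with c1 c2
  · constructor
    · simp [List.nodup_append, h1, hv]; exact fun a ha h => hv (h ▸ ha)
    · rw [List.pairwise_append]
      refine ⟨h2, by simp, ?_⟩
      intro a ha b hb
      simp at hb
      subst hb
      simpa using (List.all_eq_true.mp c1 a ha)
  · constructor
    · simp [h1, hv]
    · refine List.Pairwise.cons ?_ h2
      intro a ha
      simpa using (List.all_eq_true.mp c2 a ha)
  · exact ⟨h1, h2⟩

lemma good_foldl {L : List (Fin n)} {l : List (Fin n)} (hl : l.Nodup)
    (hdisj : ∀ x ∈ L, x ∉ l) (hL : Good G L) : Good G (l.foldl (step G) L) := by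
  induction l generalizing L with
  | nil => exact hL
  | cons a t ih =>
    have ha : a ∉ L := fun h => (hdisj a h) (by simp)
    refine ih (List.Nodup.of_cons hl) ?_ (good_step G hL ha)
    intro x hx
    rcases mem_step' G hx with h1 | h1
    · intro hxt; exact (hdisj x h1) (by simp [hxt])
    · subst h1; exact (List.nodup_cons.mp hl).1

/-- if v's entry condition (everyone in acc beats v... i.e. all arcs into v) would hold,
v gets added when processed -/
lemma mem_step_self_back {L : List (Fin n)} {v : Fin n}
    (h : ∀ u ∈ L, G.arc u v = true) : v ∈ step G L v := by
  unfold step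
  have : L.all (fun u => G.arc u v) := List.all_eq_true.mpr (fun u hu => by simpa using h u hu)
  rw [if_pos this]; simp

lemma mem_step_self_front {L : List (Fin n)} {v : Fin n}
    (h : ∀ u ∈ L, G.arc v u = true) : v ∈ step G L v := by
  unfold step
  split_ifs with c1 c2
  · simp
  · simp
  · exact absurd (List.all_eq_true.mpr (fun u hu => by simpa using h u hu)) c2

lemma added_of_prefix_back {a b : List (Fin n)} {v : Fin n}
    (h : ∀ u ∈ a, G.arc u v = true) :
    v ∈ ((a ++ v :: b).foldl (step G) []) := by
  rw [show a ++ v :: b = (a ++ [v]) ++ b by simp, List.foldl_append, List.foldl_append]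
  apply mem_foldl
  simp only [List.foldl_cons, List.foldl_nil]
  apply mem_step_self_back
  intro u hu
  rcases mem_foldl' G hu with h1 | h1
  · simp at h1
  · exact h u h1

lemma added_of_prefix_front {a b : List (Fin n)} {v : Fin n}
    (h : ∀ u ∈ a, G.arc v u = true) :
    v ∈ ((a ++ v :: b).foldl (step G) []) := by
  rw [show a ++ v :: b = (a ++ [v]) ++ b by simp, List.foldl_append, List.foldl_append]
  apply mem_foldl
  simp only [List.foldl_cons, List.foldl_nil]
  apply mem_step_self_front
  intro u hu
  rcases mem_foldl' G hu with h1 | h1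
  · simp at h1
  · exact h u h1



section Perm
open Finset Equiv

variable {n : ℕ} (G : SemicompleteDigraph n)

/-- processing order induced by σ -/
def pr (σ : Equiv.Perm (Fin n)) : Fin n → Fin n → Prop := fun x y => σ x ≤ σ y

instance (σ : Equiv.Perm (Fin n)) : DecidableRel (pr σ) := fun x y => by
  unfold pr; infer_instance

instance (σ : Equiv.Perm (Fin n)) : IsTrans (Fin n) (pr σ) :=
  ⟨fun _ _ _ h1 h2 => le_trans h1 h2⟩

instance (σ : Equiv.Perm (Fin n)) : IsAntisymm (Fin n) (pr σ) :=
  ⟨fun _ _ h1 h2 => σ.injective (le_antisymm h1 h2)⟩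

instance (σ : Equiv.Perm (Fin n)) : IsTotal (Fin n) (pr σ) :=
  ⟨fun _ _ => le_total _ _⟩

def procList (σ : Equiv.Perm (Fin n)) : List (Fin n) := Finset.sort Finset.univ (pr σ)

def greedy (σ : Equiv.Perm (Fin n)) : List (Fin n) := (procList σ).foldl (step G) []

lemma good_greedy (σ : Equiv.Perm (Fin n)) : Good G (greedy G σ) := by
  apply good_foldl G (Finset.sort_nodup _ _) (by simp) ⟨List.nodup_nil, List.Pairwise.nil⟩

/-- key: the split of procList at v has prefix elements all with σ u ≤ σ v -/
lemma exists_split (σ : Equiv.Perm (Fin n)) (v : Fin n) :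
    ∃ a b : List (Fin n), procList σ = a ++ v :: b ∧ ∀ u ∈ a, σ u < σ v := by
  have hv : v ∈ procList σ := (Finset.mem_sort _).mpr (Finset.mem_univ v)
  obtain ⟨a, b, hab⟩ := List.append_of_mem hv
  refine ⟨a, b, hab, ?_⟩
  have hs : List.Pairwise (pr σ) (procList σ) := Finset.pairwise_sort _ _
  have hnd : (procList σ).Nodup := Finset.sort_nodup _ _
  rw [hab] at hs hnd
  rw [List.pairwise_append] at hs
  intro u hu
  have h1 : pr σ u v := hs.2.2 u hu v (by simp)
  have h2 : u ≠ v := by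
    rintro rfl
    rw [List.nodup_append] at hnd
    exact hnd.2.2 u hu u (by simp) rfl
  exact lt_of_le_of_ne h1 (fun h => h2 (σ.injective h))

lemma mem_greedy_of_Nplus (σ : Equiv.Perm (Fin n)) (v : Fin n)
    (h : ∀ u ∈ Nplus G v, σ v < σ u) : v ∈ greedy G σ := by
  obtain ⟨a, b, hab, ha⟩ := exists_split σ v
  unfold greedy
  rw [hab]
  apply added_of_prefix_back
  intro u hu
  have huv : u ≠ v := fun h' => by subst h'; exact lt_irrefl _ (ha u hu)
  apply arc_of_not_OW G huv
  intro how
  have : u ∈ Nplus G v := by simp [Nplus, how]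
  exact absurd (h u this) (not_lt.mpr (le_of_lt (ha u hu)))

lemma mem_greedy_of_Nminus (σ : Equiv.Perm (Fin n)) (v : Fin n)
    (h : ∀ u ∈ Nminus G v, σ v < σ u) : v ∈ greedy G σ := by
  obtain ⟨a, b, hab, ha⟩ := exists_split σ v
  unfold greedy
  rw [hab]
  apply added_of_prefix_front
  intro u hu
  have huv : v ≠ u := fun h' => by
    rw [← h'] at hu
    exact lt_irrefl _ (ha v hu)
  apply arc_of_not_OW G huv
  intro how
  have : u ∈ Nminus G v := by simp [Nminus, how]
  exact absurd (h u this) (not_lt.mpr (le_of_lt (ha u hu)))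

end Perm
section DegSum
open Finset

variable {n : ℕ} (G : SemicompleteDigraph n)

def dp (v : Fin n) : ℕ := (Nplus G v).card
def dm (v : Fin n) : ℕ := (Nminus G v).card

def Pow : Finset (Fin n × Fin n) := univ.filter (fun p => OW G p.1 p.2)

lemma OW_ne {u v : Fin n} (h : OW G u v) : u ≠ v := by
  rintro rfl
  exact absurd h.1 (by simp [G.loopless u])

lemma not_OW_both {u v : Fin n} (h : OW G u v) : ¬ OW G v u := by
  intro h2
  exact absurd h2.1 (by simp [h.2])

lemma Pow_card_fst : (Pow G).card = ∑ v ∈ univ, dp G v := by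
  rw [Finset.card_eq_sum_card_fiberwise (f := Prod.fst) (t := univ) (fun x _ => mem_univ _)]
  apply Finset.sum_congr rfl
  intro v _
  apply Finset.card_nbij' (i := Prod.snd) (j := fun u => (v, u))
  · intro p hp
    simp only [Finset.mem_coe, Pow, Finset.mem_filter, Finset.mem_univ, true_and] at hp
    obtain ⟨h1, h2⟩ := hp
    simp only [Finset.mem_coe, Nplus, Finset.mem_filter, Finset.mem_univ, true_and]
    rwa [h2] at h1
  · intro u hu
    simp only [Finset.mem_coe, Nplus, Finset.mem_filter, Finset.mem_univ, true_and] at hu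
    simp only [Finset.mem_coe, Pow, Finset.mem_filter, Finset.mem_univ, true_and, and_true]
    exact hu
  · intro p hp
    simp only [Finset.mem_coe, Pow, Finset.mem_filter, Finset.mem_univ, true_and] at hp
    rw [← hp.2]
  · intro u _
    rfl

lemma Pow_card_snd : (Pow G).card = ∑ v ∈ univ, dm G v := by
  rw [Finset.card_eq_sum_card_fiberwise (f := Prod.snd) (t := univ) (fun x _ => mem_univ _)]
  apply Finset.sum_congr rfl
  intro v _
  apply Finset.card_nbij' (i := Prod.fst) (j := fun u => (u, v))
  · intro p hp
    simp only [Finset.mem_coe, Pow, Finset.mem_filter, Finset.mem_univ, true_and] at hp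
    obtain ⟨h1, h2⟩ := hp
    simp only [Finset.mem_coe, Nminus, Finset.mem_filter, Finset.mem_univ, true_and]
    rwa [h2] at h1
  · intro u hu
    simp only [Finset.mem_coe, Nminus, Finset.mem_filter, Finset.mem_univ, true_and] at hu
    simp only [Finset.mem_coe, Pow, Finset.mem_filter, Finset.mem_univ, true_and, and_true]
    exact hu
  · intro p hp
    simp only [Finset.mem_coe, Pow, Finset.mem_filter, Finset.mem_univ, true_and] at hp
    rw [← hp.2]
  · intro u _
    rfl

lemma Pow_card_eq : (Pow G).card = G.oneWayCount := by
  unfold SemicompleteDigraph.oneWayCount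
  apply Finset.card_nbij'
    (i := fun p => if p.1 < p.2 then p else p.swap)
    (j := fun o => if OW G o.1 o.2 then o else o.swap)
  · intro p hp
    dsimp only
    simp only [Finset.mem_coe, Pow, Finset.mem_filter, Finset.mem_univ, true_and] at hp
    have hne : p.1 ≠ p.2 := OW_ne G hp
    rcases lt_or_gt_of_ne hne with h | h
    · rw [if_pos h]
      simp only [Finset.mem_coe, Finset.mem_filter, Finset.mem_univ, true_and]
      refine ⟨h, ?_⟩
      rintro ⟨-, h2⟩
      rw [hp.2] at h2
      simp at h2
    · rw [if_neg (not_lt.mpr (le_of_lt h))]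
      simp only [Finset.mem_coe, Finset.mem_filter, Finset.mem_univ, true_and, Prod.fst_swap, Prod.snd_swap]
      refine ⟨h, ?_⟩
      rintro ⟨h2, -⟩
      rw [hp.2] at h2
      simp at h2
  · intro o ho
    dsimp only
    simp only [Finset.mem_coe, Finset.mem_filter, Finset.mem_univ, true_and] at ho
    obtain ⟨hlt, hnb⟩ := ho
    by_cases h : OW G o.1 o.2
    · rw [if_pos h]
      simp only [Finset.mem_coe, Pow, Finset.mem_filter, Finset.mem_univ, true_and]
      exact h
    · rw [if_neg h]
      simp only [Finset.mem_coe, Pow, Finset.mem_filter, Finset.mem_univ, true_and, Prod.fst_swap, Prod.snd_swap]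
      have hne : o.1 ≠ o.2 := ne_of_lt hlt
      rcases G.total o.1 o.2 hne with h1 | h1
      · -- arc o1 o2 true; since not OW, arc o2 o1 must be true; but then both, contradiction
        have h2 : G.arc o.2 o.1 = true := by
          by_contra h3
          exact h ⟨h1, by simpa using h3⟩
        exact absurd ⟨h1, h2⟩ hnb
      · refine ⟨h1, ?_⟩
        by_contra h3
        simp only [Bool.not_eq_false] at h3
        exact absurd ⟨h3, h1⟩ hnb
  · intro p hp
    dsimp only
    simp only [Finset.mem_coe, Pow, Finset.mem_filter, Finset.mem_univ, true_and] at hp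
    by_cases h : p.1 < p.2
    · rw [if_pos h, if_pos hp]
    · rw [if_neg h, if_neg (by simpa using not_OW_both G hp), Prod.swap_swap]
  · intro o ho
    dsimp only
    simp only [Finset.mem_coe, Finset.mem_filter, Finset.mem_univ, true_and] at ho
    by_cases h : OW G o.1 o.2
    · rw [if_pos h, if_pos ho.1]
    · rw [if_neg h, if_neg (by simp [not_lt.mpr (le_of_lt ho.1)]), Prod.swap_swap]

lemma deg_sum : ∑ v ∈ univ, (dp G v + dm G v) = 2 * G.oneWayCount := by
  rw [Finset.sum_add_distrib, ← Pow_card_fst, ← Pow_card_snd, Pow_card_eq, two_mul]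

lemma Nplus_Nminus_disjoint (v : Fin n) : Disjoint (Nplus G v) (Nminus G v) := by
  rw [Finset.disjoint_left]
  intro u h1 h2
  simp only [Nplus, Nminus, Finset.mem_filter, Finset.mem_univ, true_and] at h1 h2
  exact not_OW_both G h1 h2

lemma v_not_mem_Nplus (v : Fin n) : v ∉ Nplus G v := by
  simp only [Nplus, Finset.mem_filter, Finset.mem_univ, true_and]
  intro h
  exact OW_ne G h rfl

lemma v_not_mem_Nminus (v : Fin n) : v ∉ Nminus G v := by
  simp only [Nminus, Finset.mem_filter, Finset.mem_univ, true_and]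
  intro h
  exact OW_ne G h rfl

end DegSum

end SCD

section Count
open Finset Equiv

variable {n : ℕ}

/-- permutations in which v comes before everything in S -/
def Ev (S : Finset (Fin n)) (v : Fin n) : Finset (Equiv.Perm (Fin n)) :=
  Finset.univ.filter (fun σ => ∀ u ∈ S, σ v < σ u)

/-- permutations where u is the minimum over T -/
def Fm (T : Finset (Fin n)) (u : Fin n) : Finset (Equiv.Perm (Fin n)) :=
  Finset.univ.filter (fun σ => ∀ x ∈ T, σ u ≤ σ x)

lemma Fm_card_eq (T : Finset (Fin n)) {v u : Fin n} (hv : v ∈ T) (hu : u ∈ T) :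
    (Fm T v).card = (Fm T u).card := by
  have key : ∀ x ∈ T, Equiv.swap v u x ∈ T := by
    intro x hx
    rcases eq_or_ne x v with rfl | h1
    · simpa [Equiv.swap_apply_left] using hu
    rcases eq_or_ne x u with rfl | h2
    · simpa [Equiv.swap_apply_right] using hv
    · rwa [Equiv.swap_apply_of_ne_of_ne h1 h2]
  apply Finset.card_nbij' (fun σ => σ * Equiv.swap v u) (fun σ => σ * Equiv.swap v u)
  · intro σ hσ
    simp only [Finset.mem_coe, Fm, Finset.mem_filter, Finset.mem_univ, true_and] at hσ ⊢
    intro x hx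
    have : (σ * Equiv.swap v u) u = σ v := by simp [Equiv.Perm.mul_apply]
    rw [this]
    have : (σ * Equiv.swap v u) x = σ (Equiv.swap v u x) := rfl
    rw [this]
    exact hσ _ (key x hx)
  · intro σ hσ
    simp only [Finset.mem_coe, Fm, Finset.mem_filter, Finset.mem_univ, true_and] at hσ ⊢
    intro x hx
    have h1 : (σ * Equiv.swap v u) v = σ u := by simp [Equiv.Perm.mul_apply]
    rw [h1]
    have h2 : (σ * Equiv.swap v u) x = σ (Equiv.swap v u x) := rfl
    rw [h2]
    exact hσ _ (key x hx)
  · intro σ _; simp [mul_assoc]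
  · intro σ _; simp [mul_assoc]

lemma Fm_cover (T : Finset (Fin n)) (hT : T.Nonempty) :
    Finset.univ.biUnion (fun u => if u ∈ T then Fm T u else ∅) = Finset.univ := by
  apply Finset.eq_univ_of_forall
  intro σ
  rw [Finset.mem_biUnion]
  have hne : (T.image σ).Nonempty := hT.image σ
  obtain ⟨u, hu, hmin⟩ : ∃ u ∈ T, σ u = (T.image σ).min' hne := by
    have := Finset.min'_mem (T.image σ) hne
    rw [Finset.mem_image] at this
    obtain ⟨u, hu, h⟩ := this
    exact ⟨u, hu, h⟩
  refine ⟨u, Finset.mem_univ u, ?_⟩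
  rw [if_pos hu]
  simp only [Fm, Finset.mem_filter, Finset.mem_univ, true_and]
  intro x hx
  rw [hmin]
  exact Finset.min'_le _ _ (Finset.mem_image_of_mem σ hx)

lemma Fm_disjoint (T : Finset (Fin n)) {u w : Fin n} (hu : u ∈ T) (hw : w ∈ T)
    (huw : u ≠ w) : Disjoint (Fm T u) (Fm T w) := by
  rw [Finset.disjoint_left]
  intro σ h1 h2
  simp only [Fm, Finset.mem_filter, Finset.mem_univ, true_and] at h1 h2
  have := le_antisymm (h1 w hw) (h2 u hu)
  exact huw (σ.injective this)

lemma card_Fm_mul (T : Finset (Fin n)) {v : Fin n} (hv : v ∈ T) :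
    (Fm T v).card * T.card = n.factorial := by
  have h1 : (Finset.univ : Finset (Equiv.Perm (Fin n))).card = n.factorial := by
    simpa using Fintype.card_perm (α := Fin n)
  have h2 : (Finset.univ.biUnion (fun u => if u ∈ T then Fm T u else ∅)).card
      = ∑ u ∈ Finset.univ, (if u ∈ T then Fm T u else ∅).card := by
    apply Finset.card_biUnion
    intro x _ y _ hxy
    by_cases hx : x ∈ T <;> by_cases hy : y ∈ T <;> simp [hx, hy, Function.onFun]
    exact Fm_disjoint T hx hy hxy
  rw [Fm_cover T ⟨v, hv⟩] at h2
  rw [← h1, h2]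
  have h3 : ∀ u ∈ Finset.univ, (if u ∈ T then Fm T u else ∅).card
      = if u ∈ T then (Fm T v).card else 0 := by
    intro u _
    by_cases hu : u ∈ T
    · simp [hu, Fm_card_eq T hu hv]
    · simp [hu]
  rw [Finset.sum_congr rfl h3, Finset.sum_ite_mem, Finset.univ_inter,
    Finset.sum_const, smul_eq_mul, mul_comm]

lemma Ev_eq_Fm (S : Finset (Fin n)) (v : Fin n) (hv : v ∉ S) :
    Ev S v = Fm (insert v S) v := by
  ext σ
  simp only [Ev, Fm, Finset.mem_filter, Finset.mem_univ, true_and]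
  constructor
  · intro h x hx
    rcases Finset.mem_insert.mp hx with rfl | hx
    · exact le_refl _
    · exact le_of_lt (h x hx)
  · intro h u hu
    have h1 := h u (Finset.mem_insert_of_mem hu)
    have h2 : σ v ≠ σ u := fun he => hv (by rw [σ.injective he]; exact hu)
    exact lt_of_le_of_ne h1 h2

lemma card_Ev_mul (S : Finset (Fin n)) (v : Fin n) (hv : v ∉ S) :
    (Ev S v).card * (S.card + 1) = n.factorial := by
  rw [Ev_eq_Fm S v hv]
  have := card_Fm_mul (insert v S) (Finset.mem_insert_self v S)
  rwa [Finset.card_insert_of_notMem hv] at this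

end Count

section Alg

lemma int_fact (s k : ℕ) : 0 ≤ ((s:ℝ) - k) * ((s:ℝ) - k - 1) := by
  rcases le_or_gt s k with h | h
  · have : (s:ℝ) ≤ k := by exact_mod_cast h
    nlinarith
  · have : (k:ℝ) + 1 ≤ s := by exact_mod_cast h
    nlinarith

/-- pointwise bound: g(a,b) ≥ chord value L_k(a+b) -/
lemma pointwise_bound (a b k : ℕ) (hk : 2 ≤ k) :
    (2*(2*(k:ℝ)+2) - 2*((a:ℝ)+(b:ℝ))) / (((k:ℝ)+1)*((k:ℝ)+2))
      ≤ 1/((a:ℝ)+1) + 1/((b:ℝ)+1) - 1/((a:ℝ)+(b:ℝ)+1) := by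
  have hk' : (2:ℝ) ≤ k := by exact_mod_cast hk
  have hA : (0:ℝ) ≤ a := Nat.cast_nonneg a
  have hB : (0:ℝ) ≤ b := Nat.cast_nonneg b
  have hApos : (0:ℝ) < a + 1 := by linarith
  have hBpos : (0:ℝ) < b + 1 := by linarith
  have hSpos : (0:ℝ) < (a:ℝ) + b + 1 := by linarith
  have hKpos : (0:ℝ) < ((k:ℝ)+1)*((k:ℝ)+2) := by nlinarith
  rcases Nat.lt_or_ge (a + b) 2 with hs | hs
  · -- s = 0 or 1 : RHS = 1
    have hrhs : 1/((a:ℝ)+1) + 1/((b:ℝ)+1) - 1/((a:ℝ)+(b:ℝ)+1) = 1 := by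
      have ha1 : a ≤ 1 := by omega
      have hb1 : b ≤ 1 := by omega
      interval_cases a <;> interval_cases b <;> first | (exfalso; omega) | norm_num
    rw [hrhs, div_le_one hKpos]
    have hS0 : (0:ℝ) ≤ (a:ℝ) + b := by linarith
    nlinarith
  · -- s ≥ 2
    have hS2 : (2:ℝ) ≤ (a:ℝ) + b := by exact_mod_cast hs
    have step1 : 4/((a:ℝ)+(b:ℝ)+2) ≤ 1/((a:ℝ)+1) + 1/((b:ℝ)+1) := by
      rw [div_add_div _ _ (ne_of_gt hApos) (ne_of_gt hBpos),
        div_le_div_iff₀ (by linarith) (by positivity)]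
      nlinarith [sq_nonneg ((a:ℝ) - b)]
    have step2 : 3/((a:ℝ)+(b:ℝ)+1) ≤ 4/((a:ℝ)+(b:ℝ)+2) := by
      rw [div_le_div_iff₀ (by linarith) (by linarith)]
      nlinarith
    have step3 : (2*(2*(k:ℝ)+2) - 2*((a:ℝ)+(b:ℝ))) / (((k:ℝ)+1)*((k:ℝ)+2))
        ≤ 2/((a:ℝ)+(b:ℝ)+1) := by
      rw [div_le_div_iff₀ hKpos hSpos]
      have hf := int_fact (a+b) k
      push_cast at hf
      nlinarith [hf]
    have : 2/((a:ℝ)+(b:ℝ)+1) = 3/((a:ℝ)+(b:ℝ)+1) - 1/((a:ℝ)+(b:ℝ)+1) := by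
      ring
    linarith

/-- final chord vs curve comparison -/
lemma chord_curve (nn mm k : ℕ) (hn : 0 < nn) (hk1 : k * nn ≤ 2 * mm)
    (hk2 : 2 * mm < (k+1) * nn) :
    2 * (nn:ℝ)^2 / (2*(mm:ℝ) + nn)
      ≤ (2*(2*(k:ℝ)+2)*(nn:ℝ) - 4*(mm:ℝ)) / (((k:ℝ)+1)*((k:ℝ)+2)) := by
  have hnR : (0:ℝ) < nn := by exact_mod_cast hn
  have hmR : (0:ℝ) ≤ mm := Nat.cast_nonneg mm
  have hKpos : (0:ℝ) < ((k:ℝ)+1)*((k:ℝ)+2) := by positivity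
  have hD : (0:ℝ) < 2*(mm:ℝ) + nn := by linarith
  have h1 : (k:ℝ) * nn ≤ 2 * mm := by exact_mod_cast hk1
  have h2 : 2 * (mm:ℝ) ≤ ((k:ℝ)+1) * nn := by
    have := le_of_lt hk2
    exact_mod_cast this
  rw [div_le_div_iff₀ hD hKpos]
  nlinarith [mul_nonneg (sub_nonneg.mpr h1) (sub_nonneg.mpr h2)]

end Alg

open Finset SCD

theorem stmt13 (n m : ℕ) (hn : 0 < n) (hm : 0 < m) (hnm : n ≤ m)
    (hm2 : m ≤ n.choose 2) (G : SemicompleteDigraph n) (hG : G.oneWayCount = m) :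
    ∃ S : Finset (Fin n), G.HasTransTournOn S ∧
      2 * (n : ℝ) ^ 2 / (2 * (m : ℝ) + (n : ℝ)) ≤ (S.card : ℝ) := by
  classical
  subst hG
  set m := G.oneWayCount with hm'
  -- the witness sets
  set A : Fin n → Finset (Equiv.Perm (Fin n)) := fun v => Ev (Nplus G v) v with hA
  set B : Fin n → Finset (Equiv.Perm (Fin n)) := fun v => Ev (Nminus G v) v with hB
  set W : Fin n → Finset (Equiv.Perm (Fin n)) :=
    fun v => univ.filter (fun σ => v ∈ greedy G σ) with hW
  have hAB_W : ∀ v, A v ∪ B v ⊆ W v := by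
    intro v σ hσ
    simp only [hW, Finset.mem_filter, Finset.mem_univ, true_and]
    rcases Finset.mem_union.mp hσ with h | h
    · simp only [hA, Ev, Finset.mem_filter, Finset.mem_univ, true_and] at h
      exact mem_greedy_of_Nplus G σ v h
    · simp only [hB, Ev, Finset.mem_filter, Finset.mem_univ, true_and] at h
      exact mem_greedy_of_Nminus G σ v h
  have hABcap : ∀ v, A v ∩ B v = Ev (Nplus G v ∪ Nminus G v) v := by
    intro v
    ext σ
    simp only [hA, hB, Ev, Finset.mem_inter, Finset.mem_filter, Finset.mem_univ, true_and,
      Finset.mem_union]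
    constructor
    · rintro ⟨h1, h2⟩ u hu
      rcases hu with h | h
      · exact h1 u h
      · exact h2 u h
    · intro h
      exact ⟨fun u hu => h u (Or.inl hu), fun u hu => h u (Or.inr hu)⟩
  -- cardinalities
  have hcardA : ∀ v, (A v).card * (dp G v + 1) = n.factorial := fun v =>
    card_Ev_mul _ v (v_not_mem_Nplus G v)
  have hcardB : ∀ v, (B v).card * (dm G v + 1) = n.factorial := fun v =>
    card_Ev_mul _ v (v_not_mem_Nminus G v)
  have hcardAB : ∀ v, (A v ∩ B v).card * (dp G v + dm G v + 1) = n.factorial := by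
    intro v
    rw [hABcap v]
    have h1 : v ∉ Nplus G v ∪ Nminus G v := by
      rw [Finset.mem_union]
      rintro (h | h)
      · exact v_not_mem_Nplus G v h
      · exact v_not_mem_Nminus G v h
    have := card_Ev_mul (Nplus G v ∪ Nminus G v) v h1
    rwa [Finset.card_union_of_disjoint (Nplus_Nminus_disjoint G v)] at this
  -- total double count
  have hswap : ∑ σ ∈ (univ : Finset (Equiv.Perm (Fin n))), (greedy G σ).length
      = ∑ v ∈ (univ : Finset (Fin n)), (W v).card := by
    have h1 : ∀ σ : Equiv.Perm (Fin n), (greedy G σ).length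
        = ∑ v ∈ (univ : Finset (Fin n)), if v ∈ greedy G σ then 1 else 0 := by
      intro σ
      rw [← Finset.card_filter]
      have h2 : univ.filter (fun v => v ∈ greedy G σ) = (greedy G σ).toFinset := by
        ext v; simp
      rw [h2, List.toFinset_card_of_nodup (good_greedy G σ).1]
    calc ∑ σ ∈ univ, (greedy G σ).length
        = ∑ σ ∈ univ, ∑ v ∈ univ, if v ∈ greedy G σ then 1 else 0 := by
          exact Finset.sum_congr rfl (fun σ _ => h1 σ)
      _ = ∑ v ∈ univ, ∑ σ ∈ univ, if v ∈ greedy G σ then 1 else 0 := Finset.sum_comm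
      _ = ∑ v ∈ univ, (W v).card := by
          refine Finset.sum_congr rfl (fun v _ => ?_)
          rw [hW, Finset.card_filter]
  -- choose a maximizing permutation
  obtain ⟨σ₀, -, hσ₀⟩ := Finset.exists_max_image (univ : Finset (Equiv.Perm (Fin n)))
    (fun σ => (greedy G σ).length) ⟨1, Finset.mem_univ 1⟩
  set t : ℕ := (greedy G σ₀).length with ht
  have hsum_le : ∑ σ ∈ (univ : Finset (Equiv.Perm (Fin n))), (greedy G σ).length
      ≤ n.factorial * t := by
    calc ∑ σ ∈ univ, (greedy G σ).length ≤ ∑ _σ ∈ (univ : Finset (Equiv.Perm (Fin n))), t :=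
          Finset.sum_le_sum (fun σ _ => hσ₀ σ (Finset.mem_univ σ))
      _ = n.factorial * t := by
          rw [Finset.sum_const, smul_eq_mul]
          congr 1
          simpa using Fintype.card_perm (α := Fin n)
  -- nat inequality
  have hnat : ∑ v ∈ (univ : Finset (Fin n)), ((A v).card + (B v).card)
      ≤ n.factorial * t + ∑ v ∈ (univ : Finset (Fin n)), (A v ∩ B v).card := by
    have h1 : ∀ v, (A v).card + (B v).card = (A v ∪ B v).card + (A v ∩ B v).card :=
      fun v => (Finset.card_union_add_card_inter (A v) (B v)).symm
    calc ∑ v ∈ univ, ((A v).card + (B v).card)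
        = ∑ v ∈ univ, ((A v ∪ B v).card + (A v ∩ B v).card) :=
          Finset.sum_congr rfl (fun v _ => h1 v)
      _ = ∑ v ∈ univ, (A v ∪ B v).card + ∑ v ∈ univ, (A v ∩ B v).card :=
          Finset.sum_add_distrib
      _ ≤ ∑ v ∈ univ, (W v).card + ∑ v ∈ univ, (A v ∩ B v).card := by
          exact Nat.add_le_add_right
            (Finset.sum_le_sum (fun v _ => Finset.card_le_card (hAB_W v))) _
      _ ≤ n.factorial * t + ∑ v ∈ univ, (A v ∩ B v).card := by
          rw [← hswap]
          gcongr
  -- pass to reals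
  have hfacpos : (0:ℝ) < (n.factorial : ℝ) := by
    exact_mod_cast Nat.factorial_pos n
  have hArc : ∀ v, ((A v).card : ℝ) = (n.factorial : ℝ) / ((dp G v : ℝ) + 1) := by
    intro v
    rw [eq_div_iff (by positivity)]
    exact_mod_cast congrArg (Nat.cast (R := ℝ)) (hcardA v)
  have hBrc : ∀ v, ((B v).card : ℝ) = (n.factorial : ℝ) / ((dm G v : ℝ) + 1) := by
    intro v
    rw [eq_div_iff (by positivity)]
    exact_mod_cast congrArg (Nat.cast (R := ℝ)) (hcardB v)
  have hABrc : ∀ v, ((A v ∩ B v).card : ℝ)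
      = (n.factorial : ℝ) / ((dp G v : ℝ) + (dm G v : ℝ) + 1) := by
    intro v
    rw [eq_div_iff (by positivity)]
    have := congrArg (Nat.cast (R := ℝ)) (hcardAB v)
    push_cast at this
    linarith [this]
  have hreal : ∑ v ∈ (univ : Finset (Fin n)),
      (1/((dp G v : ℝ) + 1) + 1/((dm G v : ℝ) + 1) - 1/((dp G v : ℝ) + (dm G v : ℝ) + 1))
      ≤ (t : ℝ) := by
    rw [← mul_le_mul_iff_right₀ hfacpos]
    have hexp : (n.factorial : ℝ) * ∑ v ∈ (univ : Finset (Fin n)),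
        (1/((dp G v : ℝ) + 1) + 1/((dm G v : ℝ) + 1) - 1/((dp G v : ℝ) + (dm G v : ℝ) + 1))
        = ∑ v ∈ (univ : Finset (Fin n)), (((A v).card : ℝ) + ((B v).card : ℝ))
          - ∑ v ∈ (univ : Finset (Fin n)), ((A v ∩ B v).card : ℝ) := by
      rw [Finset.mul_sum, ← Finset.sum_sub_distrib]
      refine Finset.sum_congr rfl (fun v _ => ?_)
      rw [hArc v, hBrc v, hABrc v]
      field_simp
    rw [hexp]
    have hnatR : (∑ v ∈ (univ : Finset (Fin n)), (((A v).card:ℝ) + ((B v).card:ℝ)))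
        ≤ (n.factorial : ℝ) * (t:ℝ) + ∑ v ∈ (univ : Finset (Fin n)), ((A v ∩ B v).card : ℝ) := by
      have := hnat
      have hcast : ((∑ v ∈ (univ : Finset (Fin n)), ((A v).card + (B v).card) : ℕ) : ℝ)
          ≤ ((n.factorial * t + ∑ v ∈ (univ : Finset (Fin n)), (A v ∩ B v).card : ℕ) : ℝ) := by
        exact_mod_cast this
      push_cast at hcast
      convert hcast using 2 <;> push_cast <;> ring
    linarith
  -- now lower bound the sum
  set k : ℕ := 2 * m / n with hk
  have hk2 : 2 ≤ k := by
    rw [hk, Nat.le_div_iff_mul_le hn]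
    omega
  have hk1n : k * n ≤ 2 * m := Nat.div_mul_le_self (2*m) n
  have hk2n : 2 * m < (k + 1) * n := by
    have h2 := Nat.mod_lt (2*m) hn
    have h1 : k * n + 2*m % n = 2*m := by
      rw [hk]
      exact Nat.div_add_mod' (2*m) n
    have h3 : (k+1) * n = k*n + n := by ring
    rw [h3]
    linarith
  have hLk : ∀ v : Fin n,
      (2*(2*(k:ℝ)+2) - 2*((dp G v :ℝ)+(dm G v :ℝ))) / (((k:ℝ)+1)*((k:ℝ)+2))
      ≤ 1/((dp G v : ℝ) + 1) + 1/((dm G v : ℝ) + 1)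
        - 1/((dp G v : ℝ) + (dm G v : ℝ) + 1) := by
    intro v
    have := pointwise_bound (dp G v) (dm G v) k hk2
    convert this using 3 <;> push_cast <;> ring
  have hsumLk : (2*(2*(k:ℝ)+2)*(n:ℝ) - 4*(m:ℝ)) / (((k:ℝ)+1)*((k:ℝ)+2))
      ≤ ∑ v ∈ (univ : Finset (Fin n)),
      (1/((dp G v : ℝ) + 1) + 1/((dm G v : ℝ) + 1) - 1/((dp G v : ℝ) + (dm G v : ℝ) + 1)) := by
    have h1 : ∑ v ∈ (univ : Finset (Fin n)),
        ((2*(2*(k:ℝ)+2) - 2*((dp G v :ℝ)+(dm G v :ℝ))) / (((k:ℝ)+1)*((k:ℝ)+2)))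
        = (2*(2*(k:ℝ)+2)*(n:ℝ) - 4*(m:ℝ)) / (((k:ℝ)+1)*((k:ℝ)+2)) := by
      rw [← Finset.sum_div]
      congr 1
      have hds := deg_sum G
      have hdsR : ∑ v ∈ (univ : Finset (Fin n)), ((dp G v : ℝ) + (dm G v : ℝ)) = 2 * (m:ℝ) := by
        have := congrArg (Nat.cast (R := ℝ)) hds
        push_cast at this
        exact this
      rw [Finset.sum_sub_distrib, Finset.sum_const, ← Finset.mul_sum, hdsR]
      simp only [Finset.card_univ, Fintype.card_fin, nsmul_eq_mul]
      ring
    rw [← h1]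
    exact Finset.sum_le_sum (fun v _ => hLk v)
  have hfinal : 2 * (n : ℝ) ^ 2 / (2 * (m : ℝ) + (n : ℝ)) ≤ (t : ℝ) := by
    have hcc := chord_curve n m k hn hk1n hk2n
    linarith
  -- produce the witness
  refine ⟨(greedy G σ₀).toFinset, ⟨greedy G σ₀, (good_greedy G σ₀).1, rfl,
    (good_greedy G σ₀).2⟩, ?_⟩
  rw [List.toFinset_card_of_nodup (good_greedy G σ₀).1]
  exact hfinal
end

section
/- Let k, r, n be positive integers such that r divides n and such that there exists a tournament on r vertices containing no transitive subtournament on k+1 vertices. Then there exists a semicomplete digraph on n vertices with exactly n(r−1)/2 one-way pairs in which every transitive subtournament has at most k·n/r vertices. (In the paper's notation, with r = R⃗(k+1) − 1 and m = n(R⃗(k+1)/2 − 1), this gives F(n,m) ≤ k·n/(R⃗(k+1) − 1).) -/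
/-- A tournament on `{0,…,r-1}`: loopless, and for every pair of distinct
vertices exactly one of the two arcs is present. -/
structure Tournament (r : ℕ) where
  arc : Fin r → Fin r → Bool
  loopless : ∀ i, arc i i = false
  oneOf : ∀ i j, i ≠ j → (arc i j = true ↔ ¬ arc j i = true)

/-- `S` carries a transitive subtournament: there is a linear ordering of `S` such
that the arc `(u,v)` is present whenever `u` precedes `v`. -/
def Tournament.HasTransTournOn {r : ℕ} (T : Tournament r) (S : Finset (Fin r)) : Prop :=
  ∃ l : List (Fin r), l.Nodup ∧ l.toFinset = S ∧
    l.Pairwise fun u v => T.arc u v = true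

lemma aux_div_mod (r g a : ℕ) (hr : 0 < r) (ha : a < r) :
    (r * g + a) / r = g ∧ (r * g + a) % r = a := by
  constructor
  · rw [Nat.mul_add_div hr, Nat.div_eq_of_lt ha, add_zero]
  · rw [Nat.mul_add_mod]; exact Nat.mod_eq_of_lt ha

lemma card_ltPairs (r : ℕ) :
    ((Finset.range r ×ˢ Finset.range r).filter fun p => p.1 < p.2).card = r * (r - 1) / 2 := by
  rw [Finset.card_filter, Finset.sum_product, Finset.sum_comm]
  have h : ∀ b ∈ Finset.range r,
      (∑ a ∈ Finset.range r, if a < b then (1 : ℕ) else 0) = b := by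
    intro b hb
    rw [← Finset.card_filter]
    have he : (Finset.range r).filter (· < b) = Finset.range b := by
      ext a
      simp only [Finset.mem_filter, Finset.mem_range]
      exact ⟨fun h => h.2, fun h => ⟨lt_trans h (Finset.mem_range.mp hb), h⟩⟩
    rw [he, Finset.card_range]
  rw [Finset.sum_congr rfl h, Finset.sum_range_id]

theorem stmt14 (k r n : ℕ) (hk : 0 < k) (hr : 0 < r) (hn : 0 < n) (hdvd : r ∣ n)
    (hT : ∃ T : Tournament r, ∀ S : Finset (Fin r), S.card = k + 1 →
      ¬ T.HasTransTournOn S) :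
    ∃ G : SemicompleteDigraph n, G.oneWayCount = n * (r - 1) / 2 ∧
      ∀ S : Finset (Fin n), G.HasTransTournOn S → S.card ≤ k * n / r := by
  obtain ⟨T, hTk⟩ := hT
  obtain ⟨m, rfl⟩ := hdvd
  have res : ∀ i : Fin (r * m), (i : ℕ) % r < r := fun i => Nat.mod_lt _ hr
  have hkey : ∀ i j : Fin (r * m), (i : ℕ) / r = (j : ℕ) / r →
      (i : ℕ) % r = (j : ℕ) % r → i = j := by
    intro i j h1 h2
    apply Fin.ext
    conv_lhs => rw [← Nat.div_add_mod (i : ℕ) r]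
    conv_rhs => rw [← Nat.div_add_mod (j : ℕ) r]
    rw [h1, h2]
  let A : Fin (r * m) → Fin (r * m) → Bool := fun i j =>
    if i = j then false
    else if (i : ℕ) / r = (j : ℕ) / r then T.arc ⟨(i : ℕ) % r, res i⟩ ⟨(j : ℕ) % r, res j⟩
    else true
  have hAsame : ∀ i j : Fin (r * m), i ≠ j → (i : ℕ) / r = (j : ℕ) / r →
      A i j = T.arc ⟨(i : ℕ) % r, res i⟩ ⟨(j : ℕ) % r, res j⟩ := by
    intro i j h1 h2
    show (if i = j then false
      else if (i : ℕ) / r = (j : ℕ) / r then T.arc ⟨(i : ℕ) % r, res i⟩ ⟨(j : ℕ) % r, res j⟩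
      else true) = _
    rw [if_neg h1, if_pos h2]
  have hAdiff : ∀ i j : Fin (r * m), (i : ℕ) / r ≠ (j : ℕ) / r → A i j = true := by
    intro i j h
    have hne : i ≠ j := fun e => h (by rw [e])
    show (if i = j then false
      else if (i : ℕ) / r = (j : ℕ) / r then T.arc ⟨(i : ℕ) % r, res i⟩ ⟨(j : ℕ) % r, res j⟩
      else true) = _
    rw [if_neg hne, if_neg h]
  have hAself : ∀ i, A i i = false := by
    intro i
    show (if i = i then false else _) = false
    rw [if_pos rfl]
  have hAtotal : ∀ i j, i ≠ j → A i j = true ∨ A j i = true := by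
    intro i j hij
    by_cases hg : (i : ℕ) / r = (j : ℕ) / r
    · have hres : (⟨(i : ℕ) % r, res i⟩ : Fin r) ≠ ⟨(j : ℕ) % r, res j⟩ := fun h =>
        hij (hkey i j hg (congrArg Fin.val h))
      rw [hAsame i j hij hg, hAsame j i (Ne.symm hij) hg.symm]
      rcases Bool.eq_false_or_eq_true (T.arc ⟨(i : ℕ) % r, res i⟩ ⟨(j : ℕ) % r, res j⟩) with h | h
      · left; exact h
      · right
        exact (T.oneOf _ _ (Ne.symm hres)).mpr (by simp [h])
    · right
      exact hAdiff j i (fun h => hg h.symm)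
  refine ⟨⟨A, hAself, hAtotal⟩, ?_, ?_⟩
  · show (Finset.univ.filter fun p : Fin (r * m) × Fin (r * m) =>
      p.1 < p.2 ∧ ¬(A p.1 p.2 = true ∧ A p.2 p.1 = true)).card = r * m * (r - 1) / 2
    have hset : (Finset.univ.filter fun p : Fin (r * m) × Fin (r * m) =>
        p.1 < p.2 ∧ ¬(A p.1 p.2 = true ∧ A p.2 p.1 = true)) =
        Finset.univ.filter fun p => p.1 < p.2 ∧ (p.1 : ℕ) / r = (p.2 : ℕ) / r := by
      apply Finset.filter_congr
      intro p _
      constructor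
      · rintro ⟨hlt, hnb⟩
        refine ⟨hlt, ?_⟩
        by_contra hg
        exact hnb ⟨hAdiff _ _ hg, hAdiff _ _ (fun h => hg h.symm)⟩
      · rintro ⟨hlt, hg⟩
        have hne : p.1 ≠ p.2 := ne_of_lt hlt
        refine ⟨hlt, ?_⟩
        rintro ⟨h1, h2⟩
        rw [hAsame _ _ hne hg] at h1
        rw [hAsame _ _ (Ne.symm hne) hg.symm] at h2
        have hres : (⟨(p.1 : ℕ) % r, res p.1⟩ : Fin r) ≠ ⟨(p.2 : ℕ) % r, res p.2⟩ := fun h =>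
          hne (hkey _ _ hg (congrArg Fin.val h))
        exact (T.oneOf _ _ hres).mp h1 h2
    have hcard : (Finset.univ.filter fun p : Fin (r * m) × Fin (r * m) =>
        p.1 < p.2 ∧ (p.1 : ℕ) / r = (p.2 : ℕ) / r).card =
        (Finset.range m ×ˢ ((Finset.range r ×ˢ Finset.range r).filter
          fun q => q.1 < q.2)).card := by
      apply Finset.card_bij (fun p _ => ((p.1 : ℕ) / r, ((p.1 : ℕ) % r, (p.2 : ℕ) % r)))
      · intro p hp
        simp only [Finset.mem_filter, Finset.mem_univ, true_and] at hp
        obtain ⟨hlt, hg⟩ := hp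
        have h1 : (p.1 : ℕ) < r * m := p.1.isLt
        have hd : (p.1 : ℕ) / r < m :=
          (Nat.div_lt_iff_lt_mul hr).mpr (lt_of_lt_of_le h1 (le_of_eq (mul_comm r m)))
        have hlt' : (p.1 : ℕ) < (p.2 : ℕ) := hlt
        have e1 := Nat.div_add_mod (p.1 : ℕ) r
        have e2 := Nat.div_add_mod (p.2 : ℕ) r
        rw [hg] at e1
        have hmlt : (p.1 : ℕ) % r < (p.2 : ℕ) % r := by
          generalize r * ((p.2 : ℕ) / r) = x at e1 e2
          omega
        simp only [Finset.mem_product, Finset.mem_filter, Finset.mem_range]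
        exact ⟨hd, ⟨res p.1, res p.2⟩, hmlt⟩
      · intro p hp q hq heq
        simp only [Finset.mem_filter, Finset.mem_univ, true_and] at hp hq
        obtain ⟨he1, he2, he3⟩ : (p.1 : ℕ) / r = (q.1 : ℕ) / r ∧
            (p.1 : ℕ) % r = (q.1 : ℕ) % r ∧ (p.2 : ℕ) % r = (q.2 : ℕ) % r := by
          simpa [Prod.ext_iff] using heq
        have h1 : p.1 = q.1 := hkey _ _ he1 he2
        have h2 : p.2 = q.2 := hkey _ _ (by rw [← hp.2, ← hq.2, he1]) he3
        exact Prod.ext h1 h2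
      · intro q hq
        simp only [Finset.mem_product, Finset.mem_filter, Finset.mem_range] at hq
        obtain ⟨hg, ⟨ha, hb⟩, hab⟩ := hq
        have hia : r * q.1 + q.2.1 < r * m := by
          calc r * q.1 + q.2.1 < r * q.1 + r := by omega
            _ = r * (q.1 + 1) := by ring
            _ ≤ r * m := Nat.mul_le_mul_left r hg
        have hib : r * q.1 + q.2.2 < r * m := by
          calc r * q.1 + q.2.2 < r * q.1 + r := by omega
            _ = r * (q.1 + 1) := by ring
            _ ≤ r * m := Nat.mul_le_mul_left r hg
        have d1 := aux_div_mod r q.1 q.2.1 hr ha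
        have d2 := aux_div_mod r q.1 q.2.2 hr hb
        refine ⟨(⟨r * q.1 + q.2.1, hia⟩, ⟨r * q.1 + q.2.2, hib⟩), ?_, ?_⟩
        · simp only [Finset.mem_filter, Finset.mem_univ, true_and]
          refine ⟨Fin.mk_lt_mk.mpr (by omega), ?_⟩
          show (r * q.1 + q.2.1) / r = (r * q.1 + q.2.2) / r
          rw [d1.1, d2.1]
        · show ((r * q.1 + q.2.1) / r, ((r * q.1 + q.2.1) % r, (r * q.1 + q.2.2) % r)) = q
          rw [d1.1, d1.2, d2.2]
    rw [hset, hcard, Finset.card_product, Finset.card_range, card_ltPairs]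
    have hev : 2 ∣ r * (r - 1) := by
      rcases Nat.even_or_odd r with he | ho
      · exact Dvd.dvd.mul_right he.two_dvd _
      · obtain ⟨c, hc⟩ := ho
        exact Dvd.dvd.mul_left (by omega : 2 ∣ (r - 1)) _
    rw [← Nat.mul_div_assoc m hev]
    congr 1
    ring
  · intro S hS
    obtain ⟨l, hnd, hlS, hpw'⟩ := hS
    have hpw : l.Pairwise (fun u v => A u v = true) := hpw'
    have hkn : k * (r * m) / r = k * m := by
      rw [show k * (r * m) = k * m * r by ring, Nat.mul_div_cancel _ hr]
    rw [← hlS, List.toFinset_card_of_nodup hnd, hkn]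
    have hsum : ∀ l' : List (Fin (r * m)),
        l'.length = ∑ g ∈ Finset.range m, l'.countP (fun i : Fin (r * m) => decide ((i : ℕ) / r = g)) := by
      intro l'
      induction l' with
      | nil => simp
      | cons i tl ih =>
        simp only [List.countP_cons, List.length_cons, Finset.sum_add_distrib, ← ih]
        have hone : ∑ g ∈ Finset.range m,
            (if (decide ((i : ℕ) / r = g)) = true then (1 : ℕ) else 0) = 1 := by
          simp only [decide_eq_true_eq]
          rw [Finset.sum_ite_eq]
          have hm' : (i : ℕ) / r ∈ Finset.range m := Finset.mem_range.mpr
            ((Nat.div_lt_iff_lt_mul hr).mpr (lt_of_lt_of_le i.isLt (le_of_eq (mul_comm r m))))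
          rw [if_pos hm']
        rw [hone]
    have hblock : ∀ g : ℕ, l.countP (fun i : Fin (r * m) => decide ((i : ℕ) / r = g)) ≤ k := by
      intro g
      rw [List.countP_eq_length_filter]
      by_contra hlen
      push_neg at hlen
      set lf := l.filter (fun i : Fin (r * m) => decide ((i : ℕ) / r = g)) with hlf
      have hsub : lf.Sublist l := List.filter_sublist
      have hmem : ∀ i ∈ lf, (i : ℕ) / r = g := by
        intro i hi
        exact of_decide_eq_true (List.mem_filter.mp hi).2
      set t := lf.take (k + 1) with htdef
      have htsub : t.Sublist lf := List.take_sublist _ _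
      have htlen : t.length = k + 1 := by rw [htdef, List.length_take]; omega
      have htnd : t.Nodup := (htsub.trans hsub).nodup hnd
      have htpw : t.Pairwise (fun u v => A u v = true) := hpw.sublist (htsub.trans hsub)
      have htmem : ∀ i ∈ t, (i : ℕ) / r = g := fun i hi => hmem i (htsub.subset hi)
      set tr := t.map (fun i : Fin (r * m) => (⟨(i : ℕ) % r, res i⟩ : Fin r)) with htr
      have htrnd : tr.Nodup := by
        apply List.Nodup.map_on ?_ htnd
        intro x hx y hy hxy
        exact hkey x y (by rw [htmem x hx, htmem y hy]) (congrArg Fin.val hxy)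
      have htrpw : tr.Pairwise (fun u v => T.arc u v = true) := by
        rw [htr, List.pairwise_map]
        have hne : t.Pairwise (fun u v : Fin (r * m) => u ≠ v) := htnd
        refine List.Pairwise.imp_of_mem ?_ (htpw.and hne)
        intro u v hu hv huv
        obtain ⟨harc, hneq⟩ := huv
        rw [hAsame u v hneq (by rw [htmem u hu, htmem v hv])] at harc
        exact harc
      have htrlen : tr.length = k + 1 := by rw [htr, List.length_map, htlen]
      exact hTk tr.toFinset (by rw [List.toFinset_card_of_nodup htrnd, htrlen])
        ⟨tr, htrnd, rfl, htrpw⟩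
    calc l.length = ∑ g ∈ Finset.range m, l.countP (fun i : Fin (r * m) => decide ((i : ℕ) / r = g)) :=
          hsum l
      _ ≤ ∑ _g ∈ Finset.range m, k := Finset.sum_le_sum (fun g _ => hblock g)
      _ = m * k := by rw [Finset.sum_const, Finset.card_range, smul_eq_mul]
      _ = k * m := mul_comm m k
end

section
/- Let C and n be positive integers such that (C+1) divides n and (C+1)² ≤ n. Then there exists a general two-coloring of the complete graph K_n with exactly C·n unicolored edges in which every monochromatic clique has at most n/(C+1) vertices. (That is, f(n, m) ≤ n/(m/n + 1) for m = C·n.) -/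
open Finset

lemma double_count {n : ℕ} (Q : Fin n → Fin n → Prop) [∀ i j, Decidable (Q i j)]
    (hs : ∀ i j, Q i j → Q j i) :
    (univ.filter fun p : Fin n × Fin n => p.1 ≠ p.2 ∧ Q p.1 p.2).card
      = 2 * (univ.filter fun p : Fin n × Fin n => p.1 < p.2 ∧ Q p.1 p.2).card := by
  have h1 : (univ.filter fun p : Fin n × Fin n => p.1 ≠ p.2 ∧ Q p.1 p.2)
      = (univ.filter fun p : Fin n × Fin n => p.1 < p.2 ∧ Q p.1 p.2)
        ∪ (univ.filter fun p : Fin n × Fin n => p.2 < p.1 ∧ Q p.1 p.2) := by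
    rw [← filter_or]
    apply filter_congr
    intro p _
    constructor
    · rintro ⟨h, hq⟩
      rcases lt_or_gt_of_ne h with h' | h'
      exacts [Or.inl ⟨h', hq⟩, Or.inr ⟨h', hq⟩]
    · rintro (⟨h, hq⟩ | ⟨h, hq⟩)
      exacts [⟨ne_of_lt h, hq⟩, ⟨(ne_of_lt h).symm, hq⟩]
  have hdisj : Disjoint (univ.filter fun p : Fin n × Fin n => p.1 < p.2 ∧ Q p.1 p.2)
      (univ.filter fun p : Fin n × Fin n => p.2 < p.1 ∧ Q p.1 p.2) := by
    rw [Finset.disjoint_left]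
    intro p hp hp'
    simp only [mem_filter] at hp hp'
    exact absurd hp'.2.1 (not_lt.mpr (le_of_lt hp.2.1))
  have hcard : (univ.filter fun p : Fin n × Fin n => p.2 < p.1 ∧ Q p.1 p.2).card
      = (univ.filter fun p : Fin n × Fin n => p.1 < p.2 ∧ Q p.1 p.2).card := by
    apply Finset.card_bij (fun p _ => p.swap)
    · intro p hp
      simp only [mem_filter] at hp ⊢
      exact ⟨mem_univ _, hp.2.1, hs _ _ hp.2.2⟩
    · intro p hp q hq h
      exact Prod.swap_injective h
    · intro p hp
      refine ⟨p.swap, ?_, by simp⟩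
      simp only [mem_filter] at hp ⊢
      exact ⟨mem_univ _, hp.2.1, hs _ _ hp.2.2⟩
  rw [h1, card_union_of_disjoint hdisj, hcard, two_mul]

lemma count_pairs {n C : ℕ} (f : Fin n → ℕ)
    (hf : ∀ v, (univ.filter fun w => f w = f v).card = C + 1) :
    (univ.filter fun p : Fin n × Fin n => p.1 ≠ p.2 ∧ f p.1 = f p.2).card = C * n := by
  rw [Finset.card_filter, Fintype.sum_prod_type]
  have key : ∀ v : Fin n,
      (∑ w : Fin n, if v ≠ w ∧ f v = f w then 1 else 0) = C := by
    intro v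
    rw [← Finset.card_filter]
    have he : (univ.filter fun w => v ≠ w ∧ f v = f w)
        = (univ.filter fun w => f w = f v).erase v := by
      ext w
      simp only [mem_filter, mem_erase, mem_univ, true_and]
      constructor
      · rintro ⟨h1, h2⟩; exact ⟨Ne.symm h1, h2.symm⟩
      · rintro ⟨h1, h2⟩; exact ⟨Ne.symm h1, h2.symm⟩
    rw [he, Finset.card_erase_of_mem (by simp), hf v]; omega
  simp only [key]
  simp [Finset.sum_const, mul_comm]
open Finset

lemma key_inj {C k n : ℕ} (hn : n = (C + 1) * k) (hk : C + 1 ≤ k) (v w : Fin n)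
    (h1 : v.val / (C + 1) = w.val / (C + 1))
    (h2 : (v.val / (C + 1) + v.val % (C + 1)) % k
        = (w.val / (C + 1) + w.val % (C + 1)) % k) : v = w := by
  have hc1 : v.val % (C + 1) < C + 1 := Nat.mod_lt _ (by omega)
  have hc2 : w.val % (C + 1) < C + 1 := Nat.mod_lt _ (by omega)
  rw [h1] at h2
  have hmod : v.val % (C + 1) = w.val % (C + 1) := by
    have h3 : v.val % (C + 1) ≡ w.val % (C + 1) [MOD k] :=
      Nat.ModEq.add_left_cancel' _ h2
    have h4 : v.val % (C + 1) % k = w.val % (C + 1) % k := h3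
    rwa [Nat.mod_eq_of_lt (show v.val % (C + 1) < k by omega),
      Nat.mod_eq_of_lt (show w.val % (C + 1) < k by omega)] at h4
  have e1 := Nat.div_add_mod v.val (C + 1)
  have e2 := Nat.div_add_mod w.val (C + 1)
  rw [h1] at e1
  exact Fin.ext (by omega)

lemma row_fiber {C k n : ℕ} (hn : n = (C + 1) * k) (v : Fin n) :
    (univ.filter fun w : Fin n => w.val / (C + 1) = v.val / (C + 1)).card = C + 1 := by
  have hrow : v.val / (C + 1) < k := by
    rw [Nat.div_lt_iff_lt_mul (by omega)]
    calc v.val < n := v.isLt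
    _ = k * (C + 1) := by rw [hn, mul_comm]
  have hlt : ∀ a : Fin (C + 1), (C + 1) * (v.val / (C + 1)) + a.val < n := by
    intro a
    have := a.isLt
    calc (C + 1) * (v.val / (C + 1)) + a.val < (C + 1) * (v.val / (C + 1)) + (C + 1) := by omega
    _ = (C + 1) * (v.val / (C + 1) + 1) := by rw [Nat.mul_succ]
    _ ≤ (C + 1) * k := Nat.mul_le_mul_left _ (by omega)
    _ = n := hn.symm
  have heq : (univ.filter fun w : Fin n => w.val / (C + 1) = v.val / (C + 1)).card
      = (univ : Finset (Fin (C + 1))).card := by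
    refine Finset.card_nbij'
      (fun w => (⟨w.val % (C + 1), Nat.mod_lt _ (by omega)⟩ : Fin (C + 1)))
      (fun a => (⟨(C + 1) * (v.val / (C + 1)) + a.val, hlt a⟩ : Fin n)) ?_ ?_ ?_ ?_
    · intro w _; exact mem_univ _
    · intro a _
      simp only [mem_coe, mem_filter, mem_univ, true_and]
      rw [Nat.mul_add_div (by omega), Nat.div_eq_of_lt a.isLt]
      omega
    · intro w hw
      simp only [mem_coe, mem_filter, mem_univ, true_and] at hw
      apply Fin.ext
      simp only
      rw [← hw]
      have := Nat.div_add_mod w.val (C + 1)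
      omega
    · intro a _
      apply Fin.ext
      simp only
      rw [Nat.mul_add_mod, Nat.mod_eq_of_lt a.isLt]
  rw [heq, card_univ, Fintype.card_fin]

lemma dia_fiber {C k n : ℕ} (hn : n = (C + 1) * k) (hk : C + 1 ≤ k) (v : Fin n) :
    (univ.filter fun w : Fin n =>
      (w.val / (C + 1) + w.val % (C + 1)) % k = (v.val / (C + 1) + v.val % (C + 1)) % k).card
      = C + 1 := by
  set d := (v.val / (C + 1) + v.val % (C + 1)) % k with hd
  have hkpos : 0 < k := by omega
  have hdlt : d < k := Nat.mod_lt _ hkpos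
  have hconstr : ∀ a : ℕ, a < C + 1 → (C + 1) * ((d + k - a) % k) + a < n := by
    intro a ha
    have h1 : (d + k - a) % k < k := Nat.mod_lt _ hkpos
    calc (C + 1) * ((d + k - a) % k) + a < (C + 1) * ((d + k - a) % k) + (C + 1) := by omega
    _ = (C + 1) * ((d + k - a) % k + 1) := by rw [Nat.mul_succ]
    _ ≤ (C + 1) * k := Nat.mul_le_mul_left _ (by omega)
    _ = n := hn.symm
  have hrowcol : ∀ a : ℕ, a < C + 1 →
      ((C + 1) * ((d + k - a) % k) + a) / (C + 1) = (d + k - a) % k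
      ∧ ((C + 1) * ((d + k - a) % k) + a) % (C + 1) = a := by
    intro a ha
    constructor
    · rw [Nat.mul_add_div (by omega), Nat.div_eq_of_lt ha]
      omega
    · rw [Nat.mul_add_mod, Nat.mod_eq_of_lt ha]
  have hdiaval : ∀ a : ℕ, a < C + 1 → ((d + k - a) % k + a) % k = d := by
    intro a ha
    rw [Nat.mod_add_mod]
    have e : d + k - a + a = d + k := by omega
    rw [e, Nat.add_mod_right, Nat.mod_eq_of_lt hdlt]
  have heq : (univ.filter fun w : Fin n =>
      (w.val / (C + 1) + w.val % (C + 1)) % k = d).card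
      = (univ : Finset (Fin (C + 1))).card := by
    refine Finset.card_nbij'
      (fun w => (⟨w.val % (C + 1), Nat.mod_lt _ (by omega)⟩ : Fin (C + 1)))
      (fun a => (⟨(C + 1) * ((d + k - a.val) % k) + a.val, hconstr a.val a.isLt⟩ : Fin n))
      ?_ ?_ ?_ ?_
    · intro w _; exact mem_univ _
    · intro a _
      simp only [mem_coe, mem_filter, mem_univ, true_and]
      rw [(hrowcol a.val a.isLt).1, (hrowcol a.val a.isLt).2]
      exact hdiaval a.val a.isLt
    · intro w hw
      simp only [mem_coe, mem_filter, mem_univ, true_and] at hw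
      apply Fin.ext
      simp only
      -- show (C+1) * ((d + k - w % (C+1)) % k) + w % (C+1) = w
      have hcol : w.val % (C + 1) < C + 1 := Nat.mod_lt _ (by omega)
      have hrw : w.val / (C + 1) < k := by
        rw [Nat.div_lt_iff_lt_mul (by omega)]
        calc w.val < n := w.isLt
        _ = k * (C + 1) := by rw [hn, mul_comm]
      have hrow : (d + k - w.val % (C + 1)) % k = w.val / (C + 1) := by
        have e1 : d + k - w.val % (C + 1) = d + (k - w.val % (C + 1)) := by omega
        rw [e1, ← hw, Nat.mod_add_mod]
        have e2 : w.val / (C + 1) + w.val % (C + 1) + (k - w.val % (C + 1))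
            = w.val / (C + 1) + k := by omega
        rw [e2, Nat.add_mod_right, Nat.mod_eq_of_lt hrw]
      rw [hrow]
      have := Nat.div_add_mod w.val (C + 1)
      omega
    · intro a _
      apply Fin.ext
      simp only
      exact (hrowcol a.val a.isLt).2
  rw [heq, card_univ, Fintype.card_fin]
theorem stmt15 (C n : ℕ) (hC : 0 < C) (hn : 0 < n) (hdvd : (C + 1) ∣ n)
    (hsq : (C + 1) ^ 2 ≤ n) :
    ∃ c : GenTwoColoring n, c.unicoloredCount = C * n ∧
      ∀ S : Finset (Fin n), c.IsMonoClique S → S.card ≤ n / (C + 1) := by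
  obtain ⟨k, hk⟩ := hdvd
  have hk1 : C + 1 ≤ k := by
    have : (C + 1) * (C + 1) ≤ (C + 1) * k := by rw [← hk]; nlinarith [hsq]
    exact Nat.le_of_mul_le_mul_left this (by omega)
  have hndiv : n / (C + 1) = k := by rw [hk]; exact Nat.mul_div_cancel_left _ (by omega)
  set row : Fin n → ℕ := fun v => v.val / (C + 1) with hrowdef
  set dia : Fin n → ℕ := fun v => (v.val / (C + 1) + v.val % (C + 1)) % k with hdiadef
  refine ⟨⟨fun i j => decide (row i ≠ row j ∨ i = j),
          fun i j => decide (dia i ≠ dia j ∨ i = j), ?_, ?_, ?_⟩, ?_, ?_⟩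
  · intro i j
    apply decide_eq_decide.mpr
    constructor
    · rintro (h | h); exacts [Or.inl h.symm, Or.inr h.symm]
    · rintro (h | h); exacts [Or.inl h.symm, Or.inr h.symm]
  · intro i j
    apply decide_eq_decide.mpr
    constructor
    · rintro (h | h); exacts [Or.inl h.symm, Or.inr h.symm]
    · rintro (h | h); exacts [Or.inl h.symm, Or.inr h.symm]
  · intro i j hij
    by_cases h : row i = row j
    · right
      simp only [decide_eq_true_eq]
      left
      intro hdia
      exact hij (key_inj hk hk1 i j h hdia)
    · left
      simp only [decide_eq_true_eq]
      exact Or.inl h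
  · -- unicolored count
    unfold GenTwoColoring.unicoloredCount
    simp only
    have hU : (univ.filter fun p : Fin n × Fin n => p.1 < p.2 ∧
          ¬(decide (row p.1 ≠ row p.2 ∨ p.1 = p.2) = true ∧
            decide (dia p.1 ≠ dia p.2 ∨ p.1 = p.2) = true))
        = (univ.filter fun p : Fin n × Fin n => p.1 < p.2 ∧ row p.1 = row p.2)
          ∪ (univ.filter fun p : Fin n × Fin n => p.1 < p.2 ∧ dia p.1 = dia p.2) := by
      rw [← filter_or]
      apply filter_congr
      intro p _
      simp only [decide_eq_true_eq]
      have hne : p.1 < p.2 → p.1 ≠ p.2 := ne_of_lt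
      constructor
      · rintro ⟨hlt, h⟩
        have hne' := hne hlt
        by_cases h1 : row p.1 = row p.2
        · exact Or.inl ⟨hlt, h1⟩
        · refine Or.inr ⟨hlt, ?_⟩
          by_contra h2
          exact h ⟨Or.inl h1, Or.inl h2⟩
      · rintro (⟨hlt, h1⟩ | ⟨hlt, h1⟩) <;>
          refine ⟨hlt, ?_⟩ <;> rintro ⟨ha, hb⟩
        · rcases ha with h' | h'
          exacts [h' h1, hne hlt h']
        · rcases hb with h' | h'
          exacts [h' h1, hne hlt h']
    rw [hU]
    have hdisj : Disjoint
        (univ.filter fun p : Fin n × Fin n => p.1 < p.2 ∧ row p.1 = row p.2)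
        (univ.filter fun p : Fin n × Fin n => p.1 < p.2 ∧ dia p.1 = dia p.2) := by
      rw [Finset.disjoint_left]
      intro p hp hp'
      simp only [mem_filter] at hp hp'
      exact absurd (key_inj hk hk1 p.1 p.2 hp.2.2 hp'.2.2) (ne_of_lt hp.2.1)
    rw [card_union_of_disjoint hdisj]
    have hA : (univ.filter fun p : Fin n × Fin n => p.1 ≠ p.2 ∧ row p.1 = row p.2).card
        = C * n := count_pairs row (fun v => row_fiber hk v)
    have hB : (univ.filter fun p : Fin n × Fin n => p.1 ≠ p.2 ∧ dia p.1 = dia p.2).card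
        = C * n := count_pairs dia (fun v => dia_fiber hk hk1 v)
    rw [double_count (fun i j => row i = row j) (fun i j h => h.symm)] at hA
    rw [double_count (fun i j => dia i = dia j) (fun i j h => h.symm)] at hB
    omega
  · -- clique bound
    intro S hS
    rw [hndiv]
    rcases hS with hS | hS
    · refine le_trans (Finset.card_le_card_of_injOn (t := Finset.range k) row (fun a _ => ?_) ?_) (le_of_eq (Finset.card_range k))
      · show row a ∈ Finset.range k
        rw [Finset.mem_range]
        rw [hrowdef]
        simp only
        rw [Nat.div_lt_iff_lt_mul (by omega)]
        calc a.val < n := a.isLt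
        _ = k * (C + 1) := by rw [hk, mul_comm]
      · intro a ha b hb hab
        by_contra hne
        have := hS a ha b hb hne
        simp only [decide_eq_true_eq] at this
        rcases this with h | h
        exacts [h hab, hne h]
    · refine le_trans (Finset.card_le_card_of_injOn (t := Finset.range k) dia (fun a _ => ?_) ?_) (le_of_eq (Finset.card_range k))
      · show dia a ∈ Finset.range k
        rw [Finset.mem_range]
        exact Nat.mod_lt _ (by omega)
      · intro a ha b hb hab
        by_contra hne
        have := hS a ha b hb hne
        simp only [decide_eq_true_eq] at this
        rcases this with h | h
        exacts [h hab, hne h]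
end
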